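/- arXiv:1610.08814 — 8 statements merged into one kernel-verified Lean document; each statement's English description precedes it below -/
import Mathlib

section
/- Let A = {A(x)}_{x∈Ω} and B = {B(y)}_{y∈Ω'} be POVMs on a finite-dimensional Hilbert space H. Then every pair of states distinguishable by B is also distinguishable by A if and only if the complex linear span of {B(y)} is contained in the complex linear span of {A(x)}. -/
open Matrix
open scoped ComplexOrder

abbrev Mat (d : ℕ) := Matrix (Fin d) (Fin d) ℂ

/-- A quantum state (density operator). -/
def IsState {d : ℕ} (ρ : Mat d) : Prop := ρ.PosSemidef ∧ ρ.trace = 1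

/-- A POVM (observable with finite outcome set). -/
def IsPOVM {d : ℕ} {ι : Type} [Fintype ι] (A : ι → Mat d) : Prop :=
  (∀ x, (A x).PosSemidef) ∧ ∑ x, A x = 1

/-- The pair of states `ρ₁, ρ₂` is distinguishable by the observable `A`. -/
def Distinguishes {d : ℕ} {ι : Type} [Fintype ι] (A : ι → Mat d) (ρ₁ ρ₂ : Mat d) : Prop :=
  ∃ x, (ρ₁ * A x).trace ≠ (ρ₂ * A x).trace

/-- Informational completeness of an observable. -/
def InfoComplete {d : ℕ} {ι : Type} [Fintype ι] (A : ι → Mat d) : Prop :=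
  ∀ ρ₁ ρ₂ : Mat d, IsState ρ₁ → IsState ρ₂ →
    (∀ x, (ρ₁ * A x).trace = (ρ₂ * A x).trace) → ρ₁ = ρ₂

namespace Stmt0Aux

/-- The linear functional `X ↦ tr (M * X)`. -/
noncomputable def traceMul {d : ℕ} (M : Mat d) : Mat d →ₗ[ℂ] ℂ where
  toFun X := (M * X).trace
  map_add' X Y := by simp [mul_add]
  map_smul' c X := by simp [mul_smul_comm]

@[simp] lemma traceMul_apply {d : ℕ} (M X : Mat d) : traceMul M X = (M * X).trace := rfl

lemma mem_span_of_trace {d : ℕ} (V : Submodule ℂ (Mat d)) (v : Mat d)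
    (h : ∀ M : Mat d, (∀ w ∈ V, (M * w).trace = 0) → (M * v).trace = 0) : v ∈ V := by
  by_contra hv
  obtain ⟨f, hf, hmap⟩ := V.exists_dual_map_eq_bot_of_notMem hv inferInstance
  set M : Mat d := Matrix.of fun i j => f (single j i 1) with hM
  have key : ∀ X : Mat d, (M * X).trace = f X := by
    intro X
    conv_rhs => rw [matrix_eq_sum_single X]
    have hsb : ∀ (i j : Fin d), single i j (X i j)
        = X i j • single i j (1 : ℂ) := fun i j => by
      rw [smul_single, smul_eq_mul, mul_one]
    simp_rw [hsb]
    rw [map_sum]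
    simp_rw [map_sum, _root_.map_smul]
    rw [Matrix.trace]
    simp only [diag_apply, mul_apply, hM, Matrix.of_apply, smul_eq_mul]
    rw [Finset.sum_comm]
    exact Finset.sum_congr rfl fun i _ => Finset.sum_congr rfl fun j _ => mul_comm _ _
  have hker : ∀ w ∈ V, (M * w).trace = 0 := by
    intro w hw
    rw [key]
    have hmem : f w ∈ V.map f := ⟨w, hw, rfl⟩
    rw [hmap] at hmem
    exact hmem
  exact hf (by rw [← key]; exact h M hker)

lemma conj_trace_mul {d : ℕ} {H A : Mat d} (hH : H.IsHermitian) (hA : A.IsHermitian) :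
    (starRingEnd ℂ) ((H * A).trace) = (H * A).trace := by
  have h1 : (H * A)ᴴ.trace = star (H * A).trace := trace_conjTranspose _
  rw [conjTranspose_mul, hH.eq, hA.eq, trace_mul_comm] at h1
  exact h1.symm

lemma psd_smul {d : ℕ} {A : Mat d} (hA : A.PosSemidef) {r : ℝ} (hr : 0 ≤ r) :
    ((r : ℂ) • A).PosSemidef := by
  constructor
  · unfold Matrix.IsHermitian
    rw [conjTranspose_smul, hA.1.eq, Complex.star_def, Complex.conj_ofReal]
  · intro x
    exact (hA.smul (Complex.zero_le_real.mpr hr)).2 x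

lemma psd_shift {d : ℕ} {H : Mat d} (hH : H.IsHermitian) (s : ℝ) (hs : |s| ≤ 1) :
    (((∑ i, |hH.eigenvalues i| : ℝ) : ℂ) • (1 : Mat d) + (s : ℂ) • H).PosSemidef := by
  set c : ℝ := ∑ i, |hH.eigenvalues i| with hc
  set U : Mat d := (hH.eigenvectorUnitary : Mat d) with hUdef
  have hU : U * star U = 1 := mem_unitaryGroup_iff.mp hH.eigenvectorUnitary.2
  have key : (c : ℂ) • (1 : Mat d) + (s : ℂ) • H
      = U * diagonal (fun i => ((c + s * hH.eigenvalues i : ℝ) : ℂ)) * Uᴴ := by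
    have hdiag : (diagonal (fun i => ((c + s * hH.eigenvalues i : ℝ) : ℂ)) : Mat d)
        = (c : ℂ) • (1 : Mat d) + (s : ℂ) • diagonal (RCLike.ofReal ∘ hH.eigenvalues) := by
      ext i j
      by_cases hij : i = j <;>
        simp [diagonal, hij, Matrix.one_apply] <;> push_cast <;> ring
    rw [← Matrix.star_eq_conjTranspose, hdiag, mul_add, add_mul, mul_smul_comm,
      smul_mul_assoc, mul_one, hU, mul_smul_comm, smul_mul_assoc, ← Unitary.conjStarAlgAut_apply (S := ℂ), ← hH.spectral_theorem]
  rw [key]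
  refine (posSemidef_diagonal_iff.mpr ?_).mul_mul_conjTranspose_same U
  intro i
  rw [Complex.zero_le_real]
  have h1 : |hH.eigenvalues i| ≤ c := hc ▸
    Finset.single_le_sum (f := fun j => |hH.eigenvalues j|)
      (fun j _ => abs_nonneg _) (Finset.mem_univ i)
  have h2 : -(|s| * |hH.eigenvalues i|) ≤ s * hH.eigenvalues i := by
    rw [← abs_mul]; exact neg_abs_le _
  nlinarith [abs_nonneg (hH.eigenvalues i)]

lemma real_parts_zero {a b : ℂ} (ha : (starRingEnd ℂ) a = a)
    (hb : (starRingEnd ℂ) b = b) (h : a + Complex.I * b = 0) : a = 0 ∧ b = 0 := by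
  have h2 : a - Complex.I * b = 0 := by
    have h3 := congrArg (starRingEnd ℂ) h
    simp only [map_add, _root_.map_mul, Complex.conj_I, ha, hb, map_zero, neg_mul] at h3
    linear_combination h3
  constructor
  · linear_combination (h + h2) / 2
  · have hIb : Complex.I * b = 0 := by linear_combination (h - h2) / 2
    rcases mul_eq_zero.mp hIb with h' | h'
    · exact absurd h' Complex.I_ne_zero
    · exact h'

lemma herm_trace_eq_zero {d : ℕ} (hd : 0 < d) {ι κ : Type} [Fintype ι] [Fintype κ]
    {A : ι → Mat d} {B : κ → Mat d} (hA : IsPOVM A)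
    (h : ∀ ρ₁ ρ₂ : Mat d, IsState ρ₁ → IsState ρ₂ →
        Distinguishes B ρ₁ ρ₂ → Distinguishes A ρ₁ ρ₂)
    {H : Mat d} (hH : H.IsHermitian) (h0 : ∀ x, (H * A x).trace = 0) (y : κ) :
    (H * B y).trace = 0 := by
  by_cases hHz : H = 0
  · simp [hHz]
  set c : ℝ := ∑ i, |hH.eigenvalues i| with hc
  have hc0 : 0 < c := by
    rcases (Finset.sum_nonneg (fun i _ => abs_nonneg (hH.eigenvalues i))).lt_or_eq with h' | h'
    · exact h'
    · exfalso
      apply hHz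
      have hz : ∀ i, hH.eigenvalues i = 0 := by
        intro i
        have := (Finset.sum_eq_zero_iff_of_nonneg
          (fun j _ => abs_nonneg (hH.eigenvalues j))).mp h'.symm i (Finset.mem_univ i)
        exact abs_eq_zero.mp this
      have hfz : (RCLike.ofReal ∘ hH.eigenvalues : Fin d → ℂ) = fun _ => 0 := by
        funext i; simp [hz i]
      rw [hH.spectral_theorem, Unitary.conjStarAlgAut_apply, hfz, Matrix.diagonal_zero, Matrix.mul_zero,
        Matrix.zero_mul]
  have trH : H.trace = 0 := by
    have : H = H * ∑ x, A x := by rw [hA.2, mul_one]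
    rw [this, Finset.mul_sum, trace_sum]
    exact Finset.sum_eq_zero fun x _ => h0 x
  set P : Mat d := (c : ℂ) • 1 + H with hP
  set N : Mat d := (c : ℂ) • 1 - H with hN
  have hPpsd : P.PosSemidef := by
    have h1 := psd_shift hH 1 (by norm_num)
    rw [show ((1 : ℝ) : ℂ) = 1 by norm_num, one_smul] at h1
    exact h1
  have hNpsd : N.PosSemidef := by
    have h2 := psd_shift hH (-1) (by norm_num)
    rw [show ((-1 : ℝ) : ℂ) = -1 by norm_num, neg_smul, one_smul,
      ← sub_eq_add_neg] at h2
    exact h2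
  have trOne : (1 : Mat d).trace = (d : ℂ) := by
    rw [Matrix.trace_one]; simp
  have hcd : ((c * d : ℝ) : ℂ) ≠ 0 := by
    simp only [ne_eq, Complex.ofReal_eq_zero]
    positivity
  set t : ℝ := (c * d)⁻¹ with ht
  have ht0 : 0 ≤ t := by positivity
  have htne : ((t : ℝ) : ℂ) ≠ 0 := by
    simp only [ne_eq, Complex.ofReal_eq_zero, ht]
    positivity
  have trP : P.trace = ((c * d : ℝ) : ℂ) := by
    rw [hP, trace_add, trace_smul, trOne, trH, add_zero, smul_eq_mul]; push_cast; ring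
  have trN : N.trace = ((c * d : ℝ) : ℂ) := by
    rw [hN, trace_sub, trace_smul, trOne, trH, sub_zero, smul_eq_mul]; push_cast; ring
  set ρ₁ : Mat d := (t : ℂ) • P with hρ₁
  set ρ₂ : Mat d := (t : ℂ) • N with hρ₂
  have hs₁ : IsState ρ₁ := by
    refine ⟨psd_smul hPpsd ht0, ?_⟩
    rw [hρ₁, trace_smul, trP, smul_eq_mul, ht, ← Complex.ofReal_mul,
      inv_mul_cancel₀ (by positivity)]
    simp
  have hs₂ : IsState ρ₂ := by
    refine ⟨psd_smul hNpsd ht0, ?_⟩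
    rw [hρ₂, trace_smul, trN, smul_eq_mul, ht, ← Complex.ofReal_mul,
      inv_mul_cancel₀ (by positivity)]
    simp
  have hndA : ¬ Distinguishes A ρ₁ ρ₂ := by
    rw [Distinguishes]
    push_neg
    intro x
    rw [hρ₁, hρ₂, hP, hN, smul_mul_assoc, smul_mul_assoc, trace_smul, trace_smul,
      add_mul, sub_mul, trace_add, trace_sub, h0 x, add_zero, sub_zero]
  have hndB : ¬ Distinguishes B ρ₁ ρ₂ := fun hb => hndA (h ρ₁ ρ₂ hs₁ hs₂ hb)
  rw [Distinguishes] at hndB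
  push_neg at hndB
  have e := hndB y
  rw [hρ₁, hρ₂, hP, hN, smul_mul_assoc, smul_mul_assoc, trace_smul, trace_smul,
    add_mul, sub_mul, trace_add, trace_sub] at e
  have e2 := mul_left_cancel₀ htne (by simpa [smul_eq_mul] using e)
  linear_combination e2 / 2

end Stmt0Aux

theorem stmt0 {d : ℕ} (hd : 0 < d) {ι κ : Type} [Fintype ι] [Fintype κ]
    (A : ι → Mat d) (B : κ → Mat d) (hA : IsPOVM A) (hB : IsPOVM B) :
    (∀ ρ₁ ρ₂ : Mat d, IsState ρ₁ → IsState ρ₂ →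
        Distinguishes B ρ₁ ρ₂ → Distinguishes A ρ₁ ρ₂) ↔
      Submodule.span ℂ (Set.range B) ≤ Submodule.span ℂ (Set.range A) := by
  constructor
  · intro h
    rw [Submodule.span_le]
    rintro _ ⟨y, rfl⟩
    apply Stmt0Aux.mem_span_of_trace
    intro M hM
    have hMA : ∀ x, (M * A x).trace = 0 :=
      fun x => hM _ (Submodule.subset_span ⟨x, rfl⟩)
    -- decompose M into Hermitian parts
    set Hm : Mat d := (1/2 : ℂ) • (M + Mᴴ) with hHm
    set K : Mat d := (-(Complex.I)/2) • (M - Mᴴ) with hK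
    have hHmH : Hm.IsHermitian := by
      unfold Matrix.IsHermitian
      rw [hHm, conjTranspose_smul, conjTranspose_add, conjTranspose_conjTranspose]
      have hs : star (1/2 : ℂ) = 1/2 := by
        rw [Complex.star_def, map_div₀, _root_.map_one, map_ofNat]
      rw [hs]
      module
    have hKH : K.IsHermitian := by
      unfold Matrix.IsHermitian
      rw [hK, conjTranspose_smul, conjTranspose_sub, conjTranspose_conjTranspose]
      have hs : star (-(Complex.I)/2 : ℂ) = Complex.I/2 := by
        rw [Complex.star_def, map_div₀, map_neg, Complex.conj_I, map_ofNat]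
        ring
      rw [hs]
      module
    have hMdec : M = Hm + Complex.I • K := by
      rw [hHm, hK, smul_smul]
      have hI : Complex.I * (-(Complex.I)/2) = 1/2 := by
        have hii := Complex.I_mul_I
        linear_combination (-(1:ℂ)/2) * hii
      rw [hI]
      module
    have hdecTr : ∀ X : Mat d, (M * X).trace
        = (Hm * X).trace + Complex.I * (K * X).trace := by
      intro X
      conv_lhs => rw [hMdec]
      simp [add_mul, smul_mul_assoc, trace_add, trace_smul, smul_eq_mul]
    have hz : ∀ x, (Hm * A x).trace = 0 ∧ (K * A x).trace = 0 := fun x =>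
      Stmt0Aux.real_parts_zero (Stmt0Aux.conj_trace_mul hHmH (hA.1 x).1)
        (Stmt0Aux.conj_trace_mul hKH (hA.1 x).1)
        (by rw [← hdecTr]; exact hMA x)
    have hHm0 := Stmt0Aux.herm_trace_eq_zero hd hA h hHmH (fun x => (hz x).1) y
    have hK0 := Stmt0Aux.herm_trace_eq_zero hd hA h hKH (fun x => (hz x).2) y
    rw [hdecTr (B y), hHm0, hK0]
    ring
  · intro hspan ρ₁ ρ₂ h1 h2 hdist
    obtain ⟨y, hy⟩ := hdist
    by_contra hc
    rw [Distinguishes] at hc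
    push_neg at hc
    apply hy
    have hBy : B y ∈ Submodule.span ℂ (Set.range A) :=
      hspan (Submodule.subset_span ⟨y, rfl⟩)
    set g : Mat d →ₗ[ℂ] ℂ := Stmt0Aux.traceMul ρ₁ - Stmt0Aux.traceMul ρ₂ with hg
    have hker : Submodule.span ℂ (Set.range A) ≤ LinearMap.ker g := by
      rw [Submodule.span_le]
      rintro _ ⟨x, rfl⟩
      simp [hg, LinearMap.mem_ker, sub_eq_zero, hc x]
    have := hker hBy
    rw [LinearMap.mem_ker, hg] at this
    simpa [sub_eq_zero] using this
end

section
/- A POVM A is a minimal element of the state-distinction preorder (i.e., A ≾_i B for every POVM B) if and only if A is trivial, meaning each effect A(x) = p_x · 1 for nonnegative reals p_x summing to 1. -/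
open Matrix
open scoped ComplexOrder

/-- A trivial observable: each effect is a nonnegative multiple of the identity,
with coefficients summing to one. -/
def TrivialPOVM {d : ℕ} {ι : Type} [Fintype ι] (A : ι → Mat d) : Prop :=
  ∃ p : ι → ℝ, (∀ x, 0 ≤ p x) ∧ ∑ x, p x = 1 ∧ ∀ x, A x = (p x : ℂ) • 1

/-- Auxiliary: trace of a rank-one operator times a matrix. -/
theorem aux_traceF {d : ℕ} (v : Fin d → ℂ) (M : Mat d) :
    (vecMulVec v (star v) * M).trace = dotProduct (star v) (M *ᵥ v) := by
  simp only [trace, diag, mul_apply, vecMulVec_apply, dotProduct, mulVec, Pi.star_apply]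
  rw [Finset.sum_comm]
  exact Finset.sum_congr rfl fun k _ => by
    rw [Finset.mul_sum]; exact Finset.sum_congr rfl fun j _ => by ring

/-- Auxiliary: normalized rank-one projections are states. -/
theorem aux_pureState {d : ℕ} (v : Fin d → ℂ) (hv : v ≠ 0) :
    IsState ((dotProduct (star v) v)⁻¹ • vecMulVec v (star v)) := by
  set t : ℂ := dotProduct (star v) v with ht
  have htr : t = ((∑ i, Complex.normSq (v i) : ℝ) : ℂ) := by
    simp [ht, dotProduct, Complex.normSq_eq_conj_mul_self]
  have ht0 : t ≠ 0 := fun h => hv (dotProduct_star_self_eq_zero.mp h)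
  constructor
  · refine Matrix.PosSemidef.of_dotProduct_mulVec_nonneg ?_ ?_
    · ext i j
      simp only [conjTranspose_apply, Matrix.smul_apply, vecMulVec_apply, Pi.star_apply,
        star_mul', star_star, smul_eq_mul, star_smul]
      rw [htr]
      simp [mul_comm]
    · intro x
      have hmv : (vecMulVec v (star v)) *ᵥ x = (dotProduct (star v) x) • v := by
        ext i
        simp [mulVec, vecMulVec_apply, dotProduct, Finset.mul_sum, mul_comm, mul_left_comm, mul_assoc]
      rw [smul_mulVec, hmv]
      have e1 : dotProduct (star x) ((dotProduct (star v) x) • v)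
          = (dotProduct (star v) x) * star (dotProduct (star v) x) := by
        rw [dotProduct_smul, smul_eq_mul, star_dotProduct x v]
      rw [dotProduct_smul, e1, smul_eq_mul]
      have e2 : (dotProduct (star v) x) * star (dotProduct (star v) x)
          = ((Complex.normSq (dotProduct (star v) x) : ℝ) : ℂ) := by
        rw [Complex.star_def, Complex.mul_conj]
      rw [e2, htr, ← Complex.ofReal_inv, ← Complex.ofReal_mul]
      rw [Complex.zero_le_real]
      have : (0:ℝ) ≤ (∑ i, Complex.normSq (v i))⁻¹ :=
        inv_nonneg.mpr (Finset.sum_nonneg fun i _ => Complex.normSq_nonneg _)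
      exact mul_nonneg this (Complex.normSq_nonneg _)
  · rw [trace_smul, smul_eq_mul]
    have : (vecMulVec v (star v)).trace = t := by
      simp [trace, diag, vecMulVec_apply, ht, dotProduct, mul_comm]
    rw [this, inv_mul_cancel₀ ht0]

set_option maxHeartbeats 1000000 in
/-- Auxiliary: a matrix whose quadratic form is a constant multiple of the norm is scalar. -/
theorem aux_key {d : ℕ} (M : Mat d) (c : ℂ)
    (h : ∀ v : Fin d → ℂ, dotProduct (star v) (M *ᵥ v) = c * dotProduct (star v) v) :
    M = c • 1 := by
  have hz : ∀ v : Fin d → ℂ, dotProduct (star v) ((M - c • 1) *ᵥ v) = 0 := by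
    intro v
    rw [sub_mulVec, dotProduct_sub, h, smul_mulVec, one_mulVec, dotProduct_smul,
      smul_eq_mul, sub_self]
  have hT : ∀ x : EuclideanSpace ℂ (Fin d),
      inner ℂ (Matrix.toEuclideanLin (M - c • 1) x) x = (0 : ℂ) := by
    intro x
    rw [EuclideanSpace.inner_eq_star_dotProduct]
    have : WithLp.equiv 2 (Fin d → ℂ) (Matrix.toEuclideanLin (M - c • 1) x)
        = (M - c • 1) *ᵥ (WithLp.equiv 2 _ x) := by
      rw [Matrix.toEuclideanLin_apply]; rfl
    rw [show (Matrix.toEuclideanLin (M - c • 1) x).ofLp = (M - c • 1) *ᵥ x.ofLp from this,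
      dotProduct_comm, star_dotProduct, hz, star_zero]
  have h0 := (inner_map_self_eq_zero (Matrix.toEuclideanLin (M - c • 1))).mp hT
  have h1 : (M - c • 1) = 0 := by
    apply Matrix.toEuclideanLin.injective
    simpa using h0
  rw [sub_eq_zero] at h1
  exact h1

theorem stmt3 {d : ℕ} (hd : 0 < d) {ι : Type} [Fintype ι]
    (A : ι → Mat d) (hA : IsPOVM A) :
    (∀ (κ : Type) [Fintype κ] (B : κ → Mat d), IsPOVM B →
        ∀ ρ₁ ρ₂ : Mat d, IsState ρ₁ → IsState ρ₂ →
          Distinguishes A ρ₁ ρ₂ → Distinguishes B ρ₁ ρ₂) ↔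
      TrivialPOVM A := by
  have hdC : (d : ℂ) ≠ 0 := Nat.cast_ne_zero.mpr hd.ne'
  constructor
  · intro hmin
    -- the maximally mixed state
    set ρ₀ : Mat d := ((d : ℂ)⁻¹) • 1 with hρ₀def
    have hρ₀ : IsState ρ₀ := by
      constructor
      · rw [hρ₀def, Matrix.smul_one_eq_diagonal]
        refine Matrix.PosSemidef.diagonal ?_
        intro i
        rw [← Complex.ofReal_natCast, ← Complex.ofReal_inv]
        exact Complex.zero_le_real.mpr (by positivity)
      · rw [hρ₀def, trace_smul, trace_one, smul_eq_mul]
        simp [inv_mul_cancel₀ hdC]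
    -- the trivial one-outcome POVM
    have hB : IsPOVM (fun _ : Unit => (1 : Mat d)) :=
      ⟨fun _ => Matrix.PosSemidef.one, by simp⟩
    -- every state gives the same outcome probabilities as ρ₀
    have hc : ∀ (x : ι) (ρ : Mat d), IsState ρ → (ρ * A x).trace = (ρ₀ * A x).trace := by
      intro x ρ hρ
      by_contra hne
      obtain ⟨u, hu⟩ := hmin Unit (fun _ : Unit => (1 : Mat d)) hB ρ ρ₀ hρ hρ₀ ⟨x, hne⟩
      exact hu (by rw [mul_one, mul_one, hρ.2, hρ₀.2])
    set c : ι → ℂ := fun x => (ρ₀ * A x).trace with hcdef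
    -- each effect is c x • 1
    have heff : ∀ x, A x = c x • 1 := by
      intro x
      apply aux_key
      intro v
      by_cases hv : v = 0
      · simp [hv]
      · set t : ℂ := dotProduct (star v) v with ht
        have ht0 : t ≠ 0 := fun h => hv (dotProduct_star_self_eq_zero.mp h)
        have := hc x _ (aux_pureState v hv)
        rw [smul_mul_assoc, trace_smul, aux_traceF, smul_eq_mul] at this
        field_simp [← ht] at this ⊢
        exact (div_eq_iff ht0).mp this
    -- nonnegativity of the coefficients
    have hcpos : ∀ x, 0 ≤ c x := by
      intro x
      have h2 := (hA.1 x).dotProduct_mulVec_nonneg (Pi.single (⟨0, hd⟩ : Fin d) (1 : ℂ))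
      rw [heff x] at h2
      simpa [smul_mulVec, one_mulVec, dotProduct_smul, dotProduct,
        Pi.single_apply] using h2
    have him : ∀ x, c x = ((c x).re : ℂ) := by
      intro x
      have h3 := (Complex.le_def.mp (hcpos x)).2
      exact Complex.ext (by simp) (by simp [← h3])
    refine ⟨fun x => (c x).re, ?_, ?_, ?_⟩
    · intro x
      exact (Complex.le_def.mp (hcpos x)).1
    · -- sum of coefficients is 1
      have hsum : ∑ x, c x = 1 := by
        have h1 := hA.2
        have h2 : ∑ x, A x = (∑ x, c x) • (1 : Mat d) := by
          rw [Finset.sum_smul]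
          exact Finset.sum_congr rfl fun x _ => heff x
        rw [h2] at h1
        have := congrFun (congrFun h1 ⟨0, hd⟩) ⟨0, hd⟩
        simpa [Matrix.smul_apply, Matrix.one_apply] using this
      apply Complex.ofReal_injective
      push_cast
      rw [← hsum]
      exact Finset.sum_congr rfl fun x _ => (him x).symm
    · intro x
      rw [heff x, him x]
  · rintro ⟨p, hp0, hps, hpe⟩ κ _ B hB ρ₁ ρ₂ h1 h2 hdist
    exfalso
    obtain ⟨x, hx⟩ := hdist
    apply hx
    rw [hpe x, mul_smul_comm, mul_smul_comm, mul_one, mul_one, trace_smul, trace_smul,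
      h1.2, h2.2]
end

section
/- An informationally complete POVM cannot perfectly distinguish any pair of distinct states: if A is informationally complete then there is no pair of states ρ₀ ≠ ρ₁ and subset O of outcomes with Σ_{x∈O} tr(ρ₀A(x)) = 1 and Σ_{x∉O} tr(ρ₁A(x)) = 1. -/
open Matrix
open scoped ComplexOrder

/-- `A` perfectly distinguishes the pair of states `ρ₀, ρ₁`. -/
def PerfectlyDistinguishes {d : ℕ} {ι : Type} [Fintype ι] [DecidableEq ι]
    (A : ι → Mat d) (ρ₀ ρ₁ : Mat d) : Prop :=
  ∃ O : Finset ι, ∑ x ∈ O, (ρ₀ * A x).trace = 1 ∧ ∑ x ∈ Oᶜ, (ρ₁ * A x).trace = 1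

open scoped MatrixOrder in
noncomputable def Matrix.PosSemidef.sqrt {n : Type} [Fintype n] [DecidableEq n]
    {A : Matrix n n ℂ} (_ : A.PosSemidef) : Matrix n n ℂ := CFC.sqrt A

open scoped MatrixOrder in
lemma Matrix.PosSemidef.posSemidef_sqrt {n : Type} [Fintype n] [DecidableEq n]
    {A : Matrix n n ℂ} (hA : A.PosSemidef) : hA.sqrt.PosSemidef :=
  (CFC.sqrt_nonneg A).posSemidef

open scoped MatrixOrder in
lemma Matrix.PosSemidef.sqrt_mul_self {n : Type} [Fintype n] [DecidableEq n]
    {A : Matrix n n ℂ} (hA : A.PosSemidef) : hA.sqrt * hA.sqrt = A :=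
  CFC.sqrt_mul_sqrt_self A hA.nonneg

section Helpers

variable {n : Type} [Fintype n] [DecidableEq n]

omit [DecidableEq n] in
private lemma trace_ct_mul_self (B : Matrix n n ℂ) :
    (Bᴴ * B).trace = ((∑ j, ∑ i, Complex.normSq (B i j) : ℝ) : ℂ) := by
  simp only [Matrix.trace, Matrix.diag, Matrix.mul_apply, Matrix.conjTranspose_apply]
  push_cast
  congr 1; ext j; congr 1; ext i
  rw [Complex.normSq_eq_conj_mul_self]
  rfl

omit [DecidableEq n] in
private lemma trace_ct_mul_self_nonneg (B : Matrix n n ℂ) : 0 ≤ (Bᴴ * B).trace := by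
  rw [trace_ct_mul_self]
  exact Complex.zero_le_real.2 (Finset.sum_nonneg fun j _ =>
    Finset.sum_nonneg fun i _ => Complex.normSq_nonneg _)

omit [DecidableEq n] in
private lemma eq_zero_of_trace_ct_mul_self (B : Matrix n n ℂ) (h : (Bᴴ * B).trace = 0) :
    B = 0 := by
  rw [trace_ct_mul_self] at h
  have h' : (∑ j, ∑ i, Complex.normSq (B i j) : ℝ) = 0 := by exact_mod_cast h
  ext i j
  have := (Finset.sum_eq_zero_iff_of_nonneg (fun j _ => Finset.sum_nonneg
    fun i _ => Complex.normSq_nonneg _)).mp h' j (Finset.mem_univ j)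
  have := (Finset.sum_eq_zero_iff_of_nonneg (fun i _ => Complex.normSq_nonneg _)).mp this i
    (Finset.mem_univ i)
  simpa using Complex.normSq_eq_zero.mp this

private lemma trace_key {P Q : Matrix n n ℂ} (hP : P.PosSemidef) (hQ : Q.PosSemidef) :
    (P * Q).trace = ((hP.sqrt * hQ.sqrt)ᴴ * (hP.sqrt * hQ.sqrt)).trace := by
  rw [conjTranspose_mul, hP.posSemidef_sqrt.isHermitian.eq, hQ.posSemidef_sqrt.isHermitian.eq]
  rw [show hQ.sqrt * hP.sqrt * (hP.sqrt * hQ.sqrt) = hQ.sqrt * (hP.sqrt * hP.sqrt) * hQ.sqrt by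
      simp only [mul_assoc], hP.sqrt_mul_self, trace_mul_cycle, hQ.sqrt_mul_self,
      Matrix.trace_mul_comm]

private lemma trace_mul_nonneg {P Q : Matrix n n ℂ} (hP : P.PosSemidef) (hQ : Q.PosSemidef) :
    0 ≤ (P * Q).trace := by
  rw [trace_key hP hQ]; exact trace_ct_mul_self_nonneg _

private lemma sqrt_mul_sqrt_eq_zero {P Q : Matrix n n ℂ} (hP : P.PosSemidef)
    (hQ : Q.PosSemidef) (h : (P * Q).trace = 0) : hP.sqrt * hQ.sqrt = 0 := by
  apply eq_zero_of_trace_ct_mul_self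
  rw [← trace_key hP hQ, h]

private lemma sqrt_mul_eq_zero_of_trace {P Q : Matrix n n ℂ} (hP : P.PosSemidef)
    (hQ : Q.PosSemidef) (h : (P * Q).trace = 0) : hP.sqrt * Q = 0 := by
  have h0 := sqrt_mul_sqrt_eq_zero hP hQ h
  calc hP.sqrt * Q = (hP.sqrt * hQ.sqrt) * hQ.sqrt := by rw [mul_assoc, hQ.sqrt_mul_self]
    _ = 0 := by rw [h0]; simp

omit [DecidableEq n] in
private lemma posSemidef_real_smul {M : Matrix n n ℂ} (hM : M.PosSemidef) {r : ℝ}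
    (hr : 0 ≤ r) : ((r : ℂ) • M).PosSemidef := by
  constructor
  · have := hM.1.eq
    unfold Matrix.IsHermitian
    rw [conjTranspose_smul, this]
    congr 1
    simp [Complex.star_def, Complex.conj_ofReal]
  · intro x
    exact (hM.smul (Complex.zero_le_real.2 hr)).2 x

end Helpers

theorem stmt5 {d : ℕ} (hd : 0 < d) {ι : Type} [Fintype ι] [DecidableEq ι]
    (A : ι → Mat d) (hA : IsPOVM A) (hIC : InfoComplete A) :
    ¬ ∃ ρ₀ ρ₁ : Mat d, IsState ρ₀ ∧ IsState ρ₁ ∧ ρ₀ ≠ ρ₁ ∧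
        PerfectlyDistinguishes A ρ₀ ρ₁ := by
  rintro ⟨ρ₀, ρ₁, ⟨h₀p, h₀t⟩, ⟨h₁p, h₁t⟩, hne, O, hO₀, hO₁⟩
  obtain ⟨hApos, hAsum⟩ := hA
  -- total probabilities sum to 1
  have htot : ∀ ρ : Mat d, ρ.trace = 1 → ∑ x, (ρ * A x).trace = 1 := by
    intro ρ hρ
    rw [← Matrix.trace_sum, ← Finset.mul_sum, hAsum, mul_one, hρ]
  -- terms outside the support set vanish
  have key : ∀ (ρ : Mat d), ρ.PosSemidef → ρ.trace = 1 → ∀ S : Finset ι,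
      (∑ x ∈ S, (ρ * A x).trace = 1) → ∀ x ∈ Sᶜ, (ρ * A x).trace = 0 := by
    intro ρ hρ hρt S hS
    have hsum : ∑ x ∈ Sᶜ, (ρ * A x).trace = 0 := by
      have h2 := htot ρ hρt
      rw [← Finset.sum_add_sum_compl S, hS] at h2
      exact add_eq_left.mp h2
    exact fun x hx => (Finset.sum_eq_zero_iff_of_nonneg
      (fun y _ => trace_mul_nonneg hρ (hApos y))).mp hsum x hx
  set S₀ := h₀p.sqrt with hS₀
  set S₁ := h₁p.sqrt with hS₁
  have hS₀H : S₀ᴴ = S₀ := h₀p.posSemidef_sqrt.isHermitian.eq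
  have hS₁H : S₁ᴴ = S₁ := h₁p.posSemidef_sqrt.isHermitian.eq
  have hS₀sq : S₀ * S₀ = ρ₀ := h₀p.sqrt_mul_self
  have hS₁sq : S₁ * S₁ = ρ₁ := h₁p.sqrt_mul_self
  -- vanishing products
  have f₀ : ∀ x ∉ O, S₀ * A x = 0 := fun x hx =>
    sqrt_mul_eq_zero_of_trace h₀p (hApos x)
      (key ρ₀ h₀p h₀t O hO₀ x (Finset.mem_compl.mpr hx))
  have f₁ : ∀ x ∈ O, S₁ * A x = 0 := by
    intro x hx
    exact sqrt_mul_eq_zero_of_trace h₁p (hApos x)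
      (key ρ₁ h₁p h₁t Oᶜ hO₁ x (by simpa using hx))
  have f₀' : ∀ x ∉ O, A x * S₀ = 0 := by
    intro x hx
    have := congrArg conjTranspose (f₀ x hx)
    rwa [conjTranspose_mul, hS₀H, (hApos x).isHermitian.eq, conjTranspose_zero] at this
  have f₁' : ∀ x ∈ O, A x * S₁ = 0 := by
    intro x hx
    have := congrArg conjTranspose (f₁ x hx)
    rwa [conjTranspose_mul, hS₁H, (hApos x).isHermitian.eq, conjTranspose_zero] at this
  -- the two states have orthogonal supports
  have htr01 : (ρ₀ * ρ₁).trace = 0 := by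
    have : ρ₀ * ρ₁ = ∑ x, ρ₀ * ρ₁ * A x := by
      rw [← Finset.mul_sum, hAsum, mul_one]
    rw [this, Matrix.trace_sum, ← Finset.sum_add_sum_compl O]
    have z₁ : ∀ x ∈ O, (ρ₀ * ρ₁ * A x).trace = 0 := by
      intro x hx
      rw [mul_assoc, show ρ₁ * A x = 0 by rw [← hS₁sq, mul_assoc, f₁ x hx, mul_zero]]
      simp
    have z₂ : ∀ x ∈ Oᶜ, (ρ₀ * ρ₁ * A x).trace = 0 := by
      intro x hx
      rw [trace_mul_cycle,
        show A x * ρ₀ = 0 by rw [← hS₀sq, ← mul_assoc, f₀' x (Finset.mem_compl.mp hx), zero_mul]]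
      simp
    rw [Finset.sum_eq_zero z₁, Finset.sum_eq_zero z₂, add_zero]
  have hS01 : S₀ * S₁ = 0 := sqrt_mul_sqrt_eq_zero h₀p h₁p htr01
  have hS10 : S₁ * S₀ = 0 := by
    have := congrArg conjTranspose hS01
    rwa [conjTranspose_mul, hS₀H, hS₁H, conjTranspose_zero] at this
  -- pick entries witnessing nonzeroness
  have hd1 : (1 : Mat d).trace = (d : ℂ) := by simp
  have hρ₀ne : ρ₀ ≠ 0 := fun h => by simp [h] at h₀t
  have hρ₁ne : ρ₁ ≠ 0 := fun h => by simp [h] at h₁t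
  have hS₀ne : S₀ ≠ 0 := fun h => hρ₀ne (by rw [← hS₀sq, h, mul_zero])
  obtain ⟨k, i, hki⟩ : ∃ k i, S₀ k i ≠ 0 := by
    by_contra h
    push_neg at h
    exact hS₀ne (by ext a b; simpa using h a b)
  obtain ⟨m, j, hmj⟩ : ∃ m j, ρ₁ m j ≠ 0 := by
    by_contra h
    push_neg at h
    exact hρ₁ne (by ext a b; simpa using h a b)
  -- the perturbation
  set E : Fin d → Fin d → Mat d := fun a b => single a b (1 : ℂ) with hE
  set M : Mat d := S₀ * E i j * S₁ + S₁ * E j i * S₀ with hM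
  set σ : Mat d := ((2⁻¹ : ℝ) : ℂ) • (ρ₀ + ρ₁) with hσ
  set σ' : Mat d := ((2⁻¹ : ℝ) : ℂ) • (ρ₀ + ρ₁ + M) with hσ'
  have hEH : ∀ a b, (E a b)ᴴ = E b a := by
    intro a b
    ext p q
    simp only [hE, Matrix.conjTranspose_apply, Matrix.single, Matrix.of_apply,
      apply_ite, star_one, star_zero]
    by_cases h1 : a = q <;> by_cases h2 : b = p <;> simp [h1, h2]
  -- σ is a state
  have hσstate : IsState σ := by
    constructor
    · exact posSemidef_real_smul (h₀p.add h₁p) (by norm_num)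
    · rw [hσ, trace_smul, trace_add, h₀t, h₁t]
      norm_num
  -- trace of M is zero
  have htrM : M.trace = 0 := by
    rw [hM, trace_add, trace_mul_comm (S₀ * E i j) S₁, ← mul_assoc, hS10,
      trace_mul_comm (S₁ * E j i) S₀, ← mul_assoc, hS01]
    simp
  -- σ' is a state
  have hσ'state : IsState σ' := by
    constructor
    · have hdiag : ∀ a : Fin d, (1 - E a a : Mat d).PosSemidef := by
        intro a
        have : (1 - E a a : Mat d) = diagonal (fun p => if p = a then 0 else 1) := by
          ext p q
          by_cases hpq : p = q
          · subst hpq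
            by_cases hpa : p = a
            · simp [hE, single, diagonal, hpa, one_apply]
            · simp [hE, single, diagonal, hpa, one_apply, (Ne.symm hpa : a ≠ p)]
          · simp [hE, single, diagonal, hpq, one_apply,
              show ¬(a = p ∧ a = q) by rintro ⟨rfl, rfl⟩; exact hpq rfl]
        rw [this]
        exact Matrix.PosSemidef.diagonal fun p => by dsimp; split <;> simp
      have h1 : (ρ₀ - S₀ * E i i * S₀).PosSemidef := by
        have := (hdiag i).mul_mul_conjTranspose_same S₀
        rw [hS₀H] at this
        have heq : S₀ * (1 - E i i) * S₀ = ρ₀ - S₀ * E i i * S₀ := by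
          rw [mul_sub, sub_mul, mul_one, hS₀sq]
        rwa [heq] at this
      have h2 : (ρ₁ - S₁ * E j j * S₁).PosSemidef := by
        have := (hdiag j).mul_mul_conjTranspose_same S₁
        rw [hS₁H] at this
        have heq : S₁ * (1 - E j j) * S₁ = ρ₁ - S₁ * E j j * S₁ := by
          rw [mul_sub, sub_mul, mul_one, hS₁sq]
        rwa [heq] at this
      have h3 : ((S₀ * E i i + S₁ * E j i) * (S₀ * E i i + S₁ * E j i)ᴴ).PosSemidef :=
        posSemidef_self_mul_conjTranspose _
      have hCC : (S₀ * E i i + S₁ * E j i) * (S₀ * E i i + S₁ * E j i)ᴴ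
          = S₀ * E i i * S₀ + S₁ * E j j * S₁ + M := by
        rw [conjTranspose_add, conjTranspose_mul, conjTranspose_mul, hS₀H, hS₁H,
          hEH i i, hEH j i]
        rw [add_mul, mul_add, mul_add]
        have e1 : S₀ * E i i * (E i i * S₀) = S₀ * E i i * S₀ := by
          rw [show S₀ * E i i * (E i i * S₀) = S₀ * (E i i * E i i) * S₀ by
            simp only [mul_assoc], hE]
          simp
        have e2 : S₀ * E i i * (E i j * S₁) = S₀ * E i j * S₁ := by
          rw [show S₀ * E i i * (E i j * S₁) = S₀ * (E i i * E i j) * S₁ by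
            simp only [mul_assoc], hE]
          simp
        have e3 : S₁ * E j i * (E i i * S₀) = S₁ * E j i * S₀ := by
          rw [show S₁ * E j i * (E i i * S₀) = S₁ * (E j i * E i i) * S₀ by
            simp only [mul_assoc], hE]
          simp
        have e4 : S₁ * E j i * (E i j * S₁) = S₁ * E j j * S₁ := by
          rw [show S₁ * E j i * (E i j * S₁) = S₁ * (E j i * E i j) * S₁ by
            simp only [mul_assoc], hE]
          simp
        rw [e1, e2, e3, e4, hM]
        abel
      have hsum : ρ₀ + ρ₁ + M = (ρ₀ - S₀ * E i i * S₀) + (ρ₁ - S₁ * E j j * S₁)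
          + (S₀ * E i i + S₁ * E j i) * (S₀ * E i i + S₁ * E j i)ᴴ := by
        rw [hCC]; abel
      rw [hσ', hsum]
      exact posSemidef_real_smul ((h1.add h2).add h3) (by norm_num)
    · rw [hσ', trace_smul, trace_add, trace_add, h₀t, h₁t, htrM]
      norm_num
  -- σ and σ' have identical statistics
  have hstat : ∀ x, (σ * A x).trace = (σ' * A x).trace := by
    intro x
    have hMA : (M * A x).trace = 0 := by
      by_cases hx : x ∈ O
      · rw [hM, add_mul, trace_add,
          show S₀ * E i j * S₁ * A x = S₀ * E i j * (S₁ * A x) by simp only [mul_assoc],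
          f₁ x hx, mul_zero, trace_zero, trace_mul_comm,
          show A x * (S₁ * E j i * S₀) = A x * S₁ * (E j i * S₀) by simp only [mul_assoc],
          f₁' x hx, zero_mul]
        simp
      · rw [hM, add_mul, trace_add,
          show S₁ * E j i * S₀ * A x = S₁ * E j i * (S₀ * A x) by simp only [mul_assoc],
          f₀ x hx, mul_zero, trace_zero, trace_mul_comm,
          show A x * (S₀ * E i j * S₁) = A x * S₀ * (E i j * S₁) by simp only [mul_assoc],
          f₀' x hx, zero_mul]
        simp
    rw [hσ, hσ', smul_mul_assoc, smul_mul_assoc, trace_smul, trace_smul,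
      add_mul, add_mul, trace_add, trace_add, hMA, add_zero, add_mul, trace_add]
  -- conclude σ = σ' from informational completeness, hence M = 0
  have hMne : M ≠ 0 := by
    intro h0
    have hMS : M * S₁ = S₀ * E i j * ρ₁ := by
      rw [hM, add_mul,
        show S₀ * E i j * S₁ * S₁ = S₀ * E i j * (S₁ * S₁) by simp only [mul_assoc],
        show S₁ * E j i * S₀ * S₁ = S₁ * E j i * (S₀ * S₁) by simp only [mul_assoc],
        hS₁sq, hS01, mul_zero, add_zero]
    have hentry : (S₀ * E i j * ρ₁) k m = S₀ k i * ρ₁ j m := by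
      rw [mul_assoc, mul_apply]
      have hterm : ∀ c, (E i j * ρ₁) c m = if c = i then ρ₁ j m else 0 := by
        intro c
        by_cases hc : c = i
        · subst hc
          simpa [hE] using Matrix.single_mul_apply_same (c := (1 : ℂ)) i j m ρ₁
        · simp [hE, Matrix.single_mul_apply_of_ne (c := (1 : ℂ)) i j c m hc, hc]
      simp only [hterm, mul_ite, mul_zero]
      simp
    have hρ₁jm : ρ₁ j m ≠ 0 := by
      intro h
      exact hmj (star_eq_zero.mp ((h₁p.isHermitian.apply j m).trans h))
    have : (S₀ * E i j * ρ₁) k m = 0 := by rw [← hMS, h0, zero_mul]; simp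
    rw [hentry] at this
    exact (mul_ne_zero hki hρ₁jm) this
  have := hIC σ σ' hσstate hσ'state hstat
  apply hMne
  have : σ' - σ = 0 := by rw [← this]; simp
  rw [hσ', hσ, ← smul_sub, show ρ₀ + ρ₁ + M - (ρ₀ + ρ₁) = M by abel] at this
  simpa using this
end

section
/- Let A be an informationally complete POVM on finite-dimensional H and let Λ be a channel compatible with A (i.e., there exist Kraus operators K_{x,i} with A(x) = Σ_i K_{x,i}* K_{x,i} and Λ(ρ) = Σ_{x,i} K_{x,i} ρ K_{x,i}*). Then the fixed point set of the dual map Λ* is the scalar multiples of the identity: Fix(Λ*) = ℂ·1. -/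
open Matrix
open scoped ComplexOrder

lemma shift_psd {d : ℕ} {X : Mat d} (hX : X.IsHermitian) (c : ℝ)
    (h : ∀ i, hX.eigenvalues i ≤ c) : ((c:ℂ) • 1 - X).PosSemidef := by
  have hU : (hX.eigenvectorUnitary : Mat d) * (star hX.eigenvectorUnitary : Mat d) = 1 :=
    Matrix.mem_unitaryGroup_iff.mp hX.eigenvectorUnitary.2
  have key : (hX.eigenvectorUnitary : Mat d) *
      diagonal (fun i => (c:ℂ) - hX.eigenvalues i) * (star hX.eigenvectorUnitary : Mat d)
      = (c:ℂ) • 1 - X := by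
    have hdiag : (diagonal (fun i => (c:ℂ) - hX.eigenvalues i) : Mat d)
        = (c:ℂ) • 1 - diagonal (RCLike.ofReal ∘ hX.eigenvalues) := by
      ext i j
      by_cases hij : i = j <;> simp [diagonal, hij, Function.comp]
    rw [hdiag, mul_sub, sub_mul, mul_smul_comm, smul_mul_assoc, mul_one, hU]
    congr 1
    exact hX.spectral_theorem.symm
  rw [← key]
  have hd : (diagonal (fun i => (c:ℂ) - hX.eigenvalues i) : Mat d).PosSemidef := by
    rw [posSemidef_diagonal_iff]
    intro i
    rw [sub_nonneg]
    exact_mod_cast h i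
  have := hd.mul_mul_conjTranspose_same (hX.eigenvectorUnitary : Mat d)
  rwa [← Matrix.star_eq_conjTranspose] at this

lemma shift_psd' {d : ℕ} {X : Mat d} (hX : X.IsHermitian) (c : ℝ)
    (h : ∀ i, c ≤ hX.eigenvalues i) : (X - (c:ℂ) • 1).PosSemidef := by
  have hU : (hX.eigenvectorUnitary : Mat d) * (star hX.eigenvectorUnitary : Mat d) = 1 :=
    Matrix.mem_unitaryGroup_iff.mp hX.eigenvectorUnitary.2
  have key : (hX.eigenvectorUnitary : Mat d) *
      diagonal (fun i => (hX.eigenvalues i : ℂ) - c) * (star hX.eigenvectorUnitary : Mat d)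
      = X - (c:ℂ) • 1 := by
    have hdiag : (diagonal (fun i => (hX.eigenvalues i : ℂ) - c) : Mat d)
        = diagonal (RCLike.ofReal ∘ hX.eigenvalues) - (c:ℂ) • 1 := by
      ext i j
      by_cases hij : i = j <;> simp [diagonal, hij, Function.comp]
    rw [hdiag, mul_sub, sub_mul, mul_smul_comm, smul_mul_assoc, mul_one, hU]
    congr 1
    exact hX.spectral_theorem.symm
  rw [← key]
  have hd : (diagonal (fun i => (hX.eigenvalues i : ℂ) - c) : Mat d).PosSemidef := by
    rw [posSemidef_diagonal_iff]
    intro i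
    rw [sub_nonneg]
    exact_mod_cast h i
  have := hd.mul_mul_conjTranspose_same (hX.eigenvectorUnitary : Mat d)
  rwa [← Matrix.star_eq_conjTranspose] at this

lemma smul_psd {d : ℕ} {X : Mat d} (hX : X.PosSemidef) {c : ℝ} (hc : 0 ≤ c) :
    ((c:ℂ) • X).PosSemidef := by
  refine Matrix.PosSemidef.of_dotProduct_mulVec_nonneg ?_ ?_
  · unfold Matrix.IsHermitian
    rw [conjTranspose_smul, hX.1.eq]
    congr 1
    simp
  · intro v
    rw [Matrix.smul_mulVec, dotProduct_smul]
    exact smul_nonneg (by exact_mod_cast Complex.zero_le_real.mpr hc) (hX.dotProduct_mulVec_nonneg v)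

lemma ic_kill {d : ℕ} (hd : 0 < d) {ι : Type} [Fintype ι] {A : ι → Mat d}
    (hA : IsPOVM A) (hIC : InfoComplete A) :
    ∀ Y : Mat d, (∀ x, (Y * A x).trace = 0) → Y = 0 := by
  have key : ∀ Z : Mat d, Z.IsHermitian → (∀ x, (Z * A x).trace = 0) → Z = 0 := by
    intro Z hZ h0
    have htr : Z.trace = 0 := by
      have : Z.trace = ∑ x, (Z * A x).trace := by
        rw [← Matrix.trace_sum]
        rw [← Finset.mul_sum, hA.2, mul_one]
      rw [this, Finset.sum_eq_zero fun x _ => h0 x]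
    set t : ℝ := 1 + ∑ i, |hZ.eigenvalues i| with ht_def
    have ht : 0 < t := by
      have : (0:ℝ) ≤ ∑ i, |hZ.eigenvalues i| := Finset.sum_nonneg fun i _ => abs_nonneg _
      linarith
    have hpsd : (Z - ((-t : ℝ):ℂ) • 1).PosSemidef := by
      apply shift_psd' hZ
      intro i
      have h1 : |hZ.eigenvalues i| ≤ ∑ j, |hZ.eigenvalues j| :=
        Finset.single_le_sum (f := fun j => |hZ.eigenvalues j|)
          (fun j _ => abs_nonneg _) (Finset.mem_univ i)
      have := neg_abs_le (hZ.eigenvalues i)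
      linarith
    have hZt : (Z - ((-t : ℝ):ℂ) • 1) = Z + (t:ℂ) • 1 := by
      push_cast
      ring_nf
      module
    rw [hZt] at hpsd
    have hdpos : (0:ℝ) < d := by exact_mod_cast hd
    set c : ℝ := (t * d)⁻¹ with hc_def
    have hc : 0 < c := by positivity
    have htrone : (1 : Mat d).trace = (d:ℂ) := by
      simp [Matrix.trace_one]
    have hstate1 : IsState (((c:ℝ):ℂ) • (Z + (t:ℂ) • 1)) := by
      constructor
      · exact smul_psd hpsd hc.le
      · rw [trace_smul, trace_add, htr, trace_smul, htrone, zero_add, smul_eq_mul, smul_eq_mul]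
        push_cast [hc_def]
        field_simp
    have hstate2 : IsState ((((d:ℝ)⁻¹ :ℝ):ℂ) • (1 : Mat d)) := by
      constructor
      · exact smul_psd (Matrix.PosSemidef.one) (by positivity)
      · rw [trace_smul, htrone, smul_eq_mul]
        push_cast
        field_simp
    have heq := hIC _ _ hstate1 hstate2 ?_
    · have : ((c:ℝ):ℂ) • Z = 0 := by
        have expand : ((c:ℝ):ℂ) • (Z + (t:ℂ) • 1) = ((c:ℝ):ℂ) • Z + (((c * t :ℝ)):ℂ) • (1:Mat d) := by
          rw [smul_add, smul_smul]
          norm_cast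
        have hct : ((c * t : ℝ):ℂ) = (((d:ℝ)⁻¹ : ℝ):ℂ) := by
          rw [hc_def]
          push_cast
          field_simp
        rw [expand, hct] at heq
        exact add_right_cancel (heq.trans (zero_add _).symm)
      have hcne : ((c:ℝ):ℂ) ≠ 0 := by exact_mod_cast hc.ne'
      exact (smul_eq_zero.mp this).resolve_left hcne
    · intro x
      rw [smul_mul_assoc, trace_smul, smul_mul_assoc, trace_smul, add_mul, trace_add, h0 x,
        zero_add, smul_mul_assoc, trace_smul, one_mul, smul_eq_mul, smul_eq_mul, smul_eq_mul]
      push_cast [hc_def]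
      have htne : (t:ℂ) ≠ 0 := by exact_mod_cast ht.ne'
      have hdne : ((d:ℕ):ℂ) ≠ 0 := by exact_mod_cast hd.ne'
      field_simp
  intro Y hY
  have hYH : ∀ x, (Yᴴ * A x).trace = 0 := by
    intro x
    have h1 : (Yᴴ * A x) = (A x * Y)ᴴ := by rw [conjTranspose_mul, (hA.1 x).1.eq]
    rw [h1, trace_conjTranspose, trace_mul_comm, hY x, star_zero]
  have hH : Y + Yᴴ = 0 := by
    apply key _ ?_ ?_
    · unfold Matrix.IsHermitian
      rw [conjTranspose_add, conjTranspose_conjTranspose, add_comm]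
    · intro x
      rw [add_mul, trace_add, hY x, hYH x, add_zero]
  have hS : Complex.I • (Y - Yᴴ) = 0 := by
    apply key _ ?_ ?_
    · unfold Matrix.IsHermitian
      rw [conjTranspose_smul, conjTranspose_sub, conjTranspose_conjTranspose]
      simp [sub_smul, smul_sub]
      module
    · intro x
      rw [smul_mul_assoc, trace_smul, sub_mul, trace_sub, hY x, hYH x, sub_zero, smul_eq_mul,
        mul_zero]
  have hS' : Y - Yᴴ = 0 := by
    rcases smul_eq_zero.mp hS with h | h
    · exact absurd h Complex.I_ne_zero
    · exact h
  have : (2:ℂ) • Y = 0 := by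
    have := congrArg₂ (· + ·) hH hS'
    simp only [add_zero] at this
    rw [← this]
    module
  rcases smul_eq_zero.mp this with h | h
  · norm_num at h
  · exact h

lemma sum_mulVec' {d : ℕ} {α : Type} (s : Finset α) (A : α → Mat d) (v : Fin d → ℂ) :
    (∑ x ∈ s, A x) *ᵥ v = ∑ x ∈ s, A x *ᵥ v := by
  ext j
  simp only [Matrix.mulVec, dotProduct, Matrix.sum_apply, Finset.sum_mul,
    Finset.sum_apply]
  exact Finset.sum_comm

lemma dotProduct_sum' {d : ℕ} {α : Type} (s : Finset α) (v : Fin d → ℂ) (w : α → Fin d → ℂ) :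
    v ⬝ᵥ (∑ x ∈ s, w x) = ∑ x ∈ s, v ⬝ᵥ w x := by
  simp only [dotProduct, Finset.sum_apply, Finset.mul_sum]
  exact Finset.sum_comm

lemma trace_vecMulVec_mul {d : ℕ} (u w : Fin d → ℂ) (B : Mat d) :
    (vecMulVec u (star w) * B).trace = star w ⬝ᵥ (B *ᵥ u) := by
  simp only [Matrix.trace, Matrix.diag, Matrix.mul_apply, vecMulVec_apply, dotProduct,
    Matrix.mulVec, Finset.mul_sum]
  rw [Finset.sum_comm]
  congr 1; ext j; congr 1; ext i; ring

lemma ic_vec {d : ℕ} (hd : 0 < d) {ι : Type} [Fintype ι] {A : ι → Mat d}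
    (hA : IsPOVM A) (hIC : InfoComplete A) (u w : Fin d → ℂ)
    (h : ∀ x, star w ⬝ᵥ (A x *ᵥ u) = 0) : u = 0 ∨ w = 0 := by
  have hY : vecMulVec u (star w) = 0 := by
    apply ic_kill hd hA hIC
    intro x
    rw [trace_vecMulVec_mul, h x]
  by_cases hu : u = 0
  · exact Or.inl hu
  · right
    obtain ⟨i, hi⟩ := Function.ne_iff.mp hu
    ext j
    have := congrFun (congrFun hY i) j
    simp only [vecMulVec_apply, Matrix.zero_apply, Pi.star_apply] at this
    rcases mul_eq_zero.mp this with h1 | h1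
    · exact absurd h1 hi
    · simpa using congrArg star h1

lemma fixed_kernel_inv {d : ℕ} {ι J : Type} [Fintype ι] [Fintype J] (K : ι → J → Mat d)
    {Zp : Mat d} (hp : Zp.PosSemidef)
    (hfix : ∑ x, ∑ i, (K x i)ᴴ * Zp * K x i = Zp) {v : Fin d → ℂ} (hv : Zp *ᵥ v = 0) :
    ∀ x i, Zp *ᵥ (K x i *ᵥ v) = 0 := by
  have expand : star v ⬝ᵥ ((∑ x, ∑ i, (K x i)ᴴ * Zp * K x i) *ᵥ v)
      = ∑ x, ∑ i, star (K x i *ᵥ v) ⬝ᵥ (Zp *ᵥ (K x i *ᵥ v)) := by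
    rw [sum_mulVec', dotProduct_sum']
    refine Finset.sum_congr rfl fun x _ => ?_
    rw [sum_mulVec', dotProduct_sum']
    refine Finset.sum_congr rfl fun i _ => ?_
    rw [← Matrix.mulVec_mulVec, ← Matrix.mulVec_mulVec, Matrix.dotProduct_mulVec,
      ← Matrix.star_mulVec]
  have h0 : ∑ x, ∑ i, star (K x i *ᵥ v) ⬝ᵥ (Zp *ᵥ (K x i *ᵥ v)) = 0 := by
    rw [← expand, hfix, hv, dotProduct_zero]
  have hnn : ∀ x i, (0:ℂ) ≤ star (K x i *ᵥ v) ⬝ᵥ (Zp *ᵥ (K x i *ᵥ v)) := fun x i => hp.dotProduct_mulVec_nonneg _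
  intro x i
  rw [← hp.dotProduct_mulVec_zero_iff]
  have houter := (Finset.sum_eq_zero_iff_of_nonneg
    (fun x _ => Finset.sum_nonneg fun i _ => hnn x i)).mp h0 x (Finset.mem_univ x)
  exact (Finset.sum_eq_zero_iff_of_nonneg (fun i _ => hnn x i)).mp houter i (Finset.mem_univ i)

theorem stmt6 {d : ℕ} (hd : 0 < d) {ι J : Type} [Fintype ι] [Fintype J]
    (A : ι → Mat d) (K : ι → J → Mat d)
    (hK : ∀ x, A x = ∑ i, (K x i)ᴴ * K x i)
    (hA : IsPOVM A) (hIC : InfoComplete A) :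
    {X : Mat d | ∑ x, ∑ i, (K x i)ᴴ * X * K x i = X} =
      {X : Mat d | ∃ c : ℂ, X = c • 1} := by
  have hPhi1 : ∑ x, ∑ i, (K x i)ᴴ * (1:Mat d) * K x i = 1 := by
    simp only [Matrix.mul_one]
    rw [← hA.2]
    exact Finset.sum_congr rfl fun x _ => (hK x).symm
  ext X
  simp only [Set.mem_setOf_eq]
  constructor
  · intro hfix
    -- Step 1: reduce to Hermitian fixed points
    suffices hher : ∀ Z : Mat d, Z.IsHermitian → (∑ x, ∑ i, (K x i)ᴴ * Z * K x i = Z) →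
        ∃ r : ℝ, Z = (r:ℂ) • 1 by
      have hfixH : ∑ x, ∑ i, (K x i)ᴴ * Xᴴ * K x i = Xᴴ := by
        have h1 := congrArg conjTranspose hfix
        simp only [conjTranspose_sum, conjTranspose_mul, conjTranspose_conjTranspose,
          ← Matrix.mul_assoc] at h1
        exact h1
      have hH := hher (X + Xᴴ) (by
          unfold Matrix.IsHermitian
          rw [conjTranspose_add, conjTranspose_conjTranspose, add_comm]) (by
          simp only [Matrix.mul_add, Matrix.add_mul, Finset.sum_add_distrib]
          rw [hfix, hfixH])
      have hS := hher (Complex.I • (X - Xᴴ)) (by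
          unfold Matrix.IsHermitian
          rw [conjTranspose_smul, conjTranspose_sub, conjTranspose_conjTranspose]
          simp only [Complex.star_def, Complex.conj_I]
          module) (by
          have hterm : ∀ x i, (K x i)ᴴ * (Complex.I • (X - Xᴴ)) * K x i
              = Complex.I • ((K x i)ᴴ * X * K x i - (K x i)ᴴ * Xᴴ * K x i) := by
            intro x i
            rw [mul_smul_comm, smul_mul_assoc, Matrix.mul_sub, Matrix.sub_mul]
          simp_rw [hterm, ← Finset.smul_sum, Finset.sum_sub_distrib]
          rw [hfix, hfixH])
      obtain ⟨r, hr⟩ := hH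
      obtain ⟨s, hs⟩ := hS
      refine ⟨((r:ℂ) - Complex.I * s) / 2, ?_⟩
      have e2 : X - Xᴴ = (-(Complex.I * s)) • (1 : Mat d) := by
        have h3 := congrArg (fun W => (-(Complex.I)) • W) hs
        simp only [smul_smul, neg_mul, Complex.I_mul_I, neg_neg, one_smul] at h3
        exact h3
      have h2 : (2:ℂ) • X = (((r:ℂ) - Complex.I * s)) • (1 : Mat d) := by
        have : (2:ℂ) • X = (X + Xᴴ) + (X - Xᴴ) := by module
        rw [this, hr, e2]
        module
      have h3 : (2:ℂ) • X = (2:ℂ) • ((((r:ℂ) - Complex.I * s) / 2) • (1:Mat d)) := by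
        rw [h2, smul_smul]
        ring_nf
      exact smul_right_injective (Mat d) two_ne_zero h3
    -- Step 2: Hermitian fixed points
    intro Z hZ hfixZ
    obtain ⟨iM, -, hiM⟩ := Finset.exists_max_image Finset.univ hZ.eigenvalues
      ⟨⟨0, hd⟩, Finset.mem_univ _⟩
    obtain ⟨im, -, him⟩ := Finset.exists_min_image Finset.univ hZ.eigenvalues
      ⟨⟨0, hd⟩, Finset.mem_univ _⟩
    set M := hZ.eigenvalues iM with hM_def
    set m := hZ.eigenvalues im with hm_def
    by_cases hMm : M = m
    · -- all eigenvalues equal: Z = M • 1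
      refine ⟨M, ?_⟩
      have hall : ∀ i, hZ.eigenvalues i = M :=
        fun i => le_antisymm (hiM i (Finset.mem_univ i)) (hMm ▸ him i (Finset.mem_univ i))
      have hU : (hZ.eigenvectorUnitary : Mat d) * (star hZ.eigenvectorUnitary : Mat d) = 1 :=
        Matrix.mem_unitaryGroup_iff.mp hZ.eigenvectorUnitary.2
      have hdiag : (diagonal (RCLike.ofReal ∘ hZ.eigenvalues) : Mat d) = (M:ℂ) • 1 := by
        ext i j
        by_cases hij : i = j <;> simp [diagonal, hij, hall, Function.comp]
      rw [hZ.spectral_theorem, hdiag, Unitary.conjStarAlgAut_apply, mul_smul_comm, smul_mul_assoc, mul_one, hU]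
    · -- m < M : contradiction with informational completeness
      exfalso
      have hmM : m < M :=
        lt_of_le_of_ne (him iM (Finset.mem_univ iM)) (fun h => hMm h.symm)
      set u : Fin d → ℂ := ⇑(hZ.eigenvectorBasis iM) with hu_def
      set w : Fin d → ℂ := ⇑(hZ.eigenvectorBasis im) with hw_def
      have hu : Z *ᵥ u = (M:ℂ) • u := by
        rw [hu_def, hZ.mulVec_eigenvectorBasis iM]
        ext k
        simp [Complex.real_smul, hM_def]
      have hw : Z *ᵥ w = (m:ℂ) • w := by
        rw [hw_def, hZ.mulVec_eigenvectorBasis im]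
        ext k
        simp [Complex.real_smul, hm_def]
      have hu0 : u ≠ 0 := by
        intro h
        refine hZ.eigenvectorBasis.orthonormal.ne_zero iM ?_
        ext k
        exact congrFun h k
      have hw0 : w ≠ 0 := by
        intro h
        refine hZ.eigenvectorBasis.orthonormal.ne_zero im ?_
        ext k
        exact congrFun h k
      -- the two shifted operators are PSD and fixed
      have hZM : ((M:ℂ) • 1 - Z).PosSemidef := shift_psd hZ M (fun i => hiM i (Finset.mem_univ i))
      have hZm : (Z - (m:ℂ) • 1).PosSemidef := shift_psd' hZ m (fun i => him i (Finset.mem_univ i))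
      have hfixZM : ∑ x, ∑ i, (K x i)ᴴ * ((M:ℂ) • 1 - Z) * K x i = (M:ℂ) • 1 - Z := by
        have hterm : ∀ x i, (K x i)ᴴ * ((M:ℂ) • 1 - Z) * K x i
            = (M:ℂ) • ((K x i)ᴴ * 1 * K x i) - (K x i)ᴴ * Z * K x i := by
          intro x i
          rw [Matrix.mul_sub, Matrix.sub_mul, mul_smul_comm, smul_mul_assoc]
        simp_rw [hterm, Finset.sum_sub_distrib, ← Finset.smul_sum]
        rw [hPhi1, hfixZ]
      have hfixZm : ∑ x, ∑ i, (K x i)ᴴ * (Z - (m:ℂ) • 1) * K x i = Z - (m:ℂ) • 1 := by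
        have hterm : ∀ x i, (K x i)ᴴ * (Z - (m:ℂ) • 1) * K x i
            = (K x i)ᴴ * Z * K x i - (m:ℂ) • ((K x i)ᴴ * 1 * K x i) := by
          intro x i
          rw [Matrix.mul_sub, Matrix.sub_mul, mul_smul_comm, smul_mul_assoc]
        simp_rw [hterm, Finset.sum_sub_distrib, ← Finset.smul_sum]
        rw [hPhi1, hfixZ]
      have hZMu : ((M:ℂ) • 1 - Z) *ᵥ u = 0 := by
        rw [Matrix.sub_mulVec, Matrix.smul_mulVec, Matrix.one_mulVec, hu, sub_self]
      have hZmw : (Z - (m:ℂ) • 1) *ᵥ w = 0 := by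
        rw [Matrix.sub_mulVec, Matrix.smul_mulVec, Matrix.one_mulVec, hw, sub_self]
      have hKu : ∀ x i, Z *ᵥ (K x i *ᵥ u) = (M:ℂ) • (K x i *ᵥ u) := by
        intro x i
        have h0 := fixed_kernel_inv K hZM hfixZM hZMu x i
        rw [Matrix.sub_mulVec, Matrix.smul_mulVec, Matrix.one_mulVec, sub_eq_zero] at h0
        exact h0.symm
      have hKw : ∀ x i, Z *ᵥ (K x i *ᵥ w) = (m:ℂ) • (K x i *ᵥ w) := by
        intro x i
        have h0 := fixed_kernel_inv K hZm hfixZm hZmw x i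
        rw [Matrix.sub_mulVec, Matrix.smul_mulVec, Matrix.one_mulVec, sub_eq_zero] at h0
        exact h0
      -- eigenvectors for distinct eigenvalues are orthogonal
      have horth : ∀ a b : Fin d → ℂ, Z *ᵥ a = (M:ℂ) • a → Z *ᵥ b = (m:ℂ) • b →
          star b ⬝ᵥ a = 0 := by
        intro a b ha hb
        have h1 : star b ⬝ᵥ (Z *ᵥ a) = (M:ℂ) * (star b ⬝ᵥ a) := by
          rw [ha, dotProduct_smul, smul_eq_mul]
        have h2 : star b ⬝ᵥ (Z *ᵥ a) = (m:ℂ) * (star b ⬝ᵥ a) := by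
          rw [Matrix.dotProduct_mulVec]
          have hsb : star b ᵥ* Z = star (Z *ᵥ b) := by
            rw [Matrix.star_mulVec, hZ.eq]
          rw [hsb, hb, star_smul, smul_dotProduct]
          simp [Complex.conj_ofReal]
        have h4 : ((M:ℂ) - m) * (star b ⬝ᵥ a) = 0 := by
          rw [sub_mul, h1.symm.trans h2, sub_self]
        rcases mul_eq_zero.mp h4 with h5 | h5
        · exfalso
          apply hMm
          have : (M:ℂ) = (m:ℂ) := sub_eq_zero.mp h5
          exact_mod_cast this
        · exact h5
      have hdist : ∀ x, star w ⬝ᵥ (A x *ᵥ u) = 0 := by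
        intro x
        rw [hK x, sum_mulVec', dotProduct_sum']
        refine Finset.sum_eq_zero fun i _ => ?_
        rw [← Matrix.mulVec_mulVec, Matrix.dotProduct_mulVec, ← Matrix.star_mulVec]
        exact horth _ _ (hKu x i) (hKw x i)
      rcases ic_vec hd hA hIC u w hdist with h | h
      · exact hu0 h
      · exact hw0 h
  · rintro ⟨c, rfl⟩
    have hterm : ∀ x i, (K x i)ᴴ * (c • (1:Mat d)) * K x i = c • ((K x i)ᴴ * 1 * K x i) := by
      intro x i
      rw [mul_smul_comm, smul_mul_assoc]
    simp_rw [hterm, ← Finset.smul_sum]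
    rw [hPhi1]
end

section
/- Let Λ be a channel on finite-dimensional H possessing a faithful invariant state (property F), with Kraus operators {K_i}. Then Fix(Λ*) = {K_i, K_i*}' , the commutant of the set of Kraus operators and their adjoints; in particular Fix(Λ*) is a *-subalgebra of B(H). -/
open Matrix
open scoped ComplexOrder

lemma psd_diag_nonneg {d : ℕ} {M : Mat d} (hM : M.PosSemidef) (i : Fin d) : 0 ≤ M i i := by
  have := hM.dotProduct_mulVec_nonneg (Pi.single i 1)
  simpa [dotProduct, Pi.single_apply, mulVec, Finset.sum_ite_eq] using this

lemma psd_trace_nonneg {d : ℕ} {M : Mat d} (hM : M.PosSemidef) : 0 ≤ M.trace := by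
  exact Finset.sum_nonneg fun i _ => psd_diag_nonneg hM i

lemma psd_trace_zero {d : ℕ} {M : Mat d} (hM : M.PosSemidef)
    (h : M.trace = 0) : M = 0 := by
  have hdiag : ∀ i, M i i = 0 := by
    have := (Fintype.sum_eq_zero_iff_of_nonneg (f := fun i => M i i)
      (fun i => psd_diag_nonneg hM i)).mp h
    exact fun i => congrFun this i
  ext i j
  have hcol : M *ᵥ Pi.single j 1 = 0 := by
    rw [← hM.dotProduct_mulVec_zero_iff]
    simpa [dotProduct, Pi.single_apply, mulVec, Finset.sum_ite_eq] using hdiag j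
  have := congrFun hcol i
  simpa [mulVec_single] using this

open scoped MatrixOrder in
lemma posDef_sqrt_aux {d : ℕ} {ρ : Mat d} (h : ρ.PosSemidef) :
    ∃ S : Mat d, S * S = ρ ∧ Sᴴ = S :=
  ⟨CFC.sqrt ρ, CFC.sqrt_mul_sqrt_self ρ h.nonneg, (CFC.sqrt_nonneg ρ).posSemidef.isHermitian⟩

theorem stmt8 {d : ℕ} (hd : 0 < d) {n : ℕ} (K : Fin n → Mat d)
    (hTP : ∑ i, (K i)ᴴ * K i = 1)
    (ρ₀ : Mat d) (hρ₀ : ρ₀.PosDef ∧ ρ₀.trace = 1)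
    (hfix : ∑ i, K i * ρ₀ * (K i)ᴴ = ρ₀) :
    ({X : Mat d | ∑ i, (K i)ᴴ * X * K i = X} =
        {X : Mat d | ∀ i, Commute X (K i) ∧ Commute X ((K i)ᴴ)}) ∧
    (∀ X Y : Mat d, (∑ i, (K i)ᴴ * X * K i = X) → (∑ i, (K i)ᴴ * Y * K i = Y) →
        (∑ i, (K i)ᴴ * (X * Y) * K i = X * Y)) ∧
    (∀ X : Mat d, (∑ i, (K i)ᴴ * X * K i = X) → (∑ i, (K i)ᴴ * Xᴴ * K i = Xᴴ)) ∧
    (∑ i, (K i)ᴴ * (1 : Mat d) * K i = 1) := by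
  -- adjoint-closedness of the fixed point set
  have hadj : ∀ X : Mat d, (∑ i, (K i)ᴴ * X * K i = X) → (∑ i, (K i)ᴴ * Xᴴ * K i = Xᴴ) := by
    intro X hX
    have := congrArg conjTranspose hX
    simpa [conjTranspose_sum, conjTranspose_mul, Matrix.mul_assoc] using this
  -- the invariant-state trace identity
  have tr_inv : ∀ A : Mat d, (ρ₀ * ∑ i, (K i)ᴴ * A * K i).trace = (ρ₀ * A).trace := by
    intro A
    calc (ρ₀ * ∑ i, (K i)ᴴ * A * K i).trace
        = ∑ i, (ρ₀ * ((K i)ᴴ * A * K i)).trace := by rw [Finset.mul_sum, trace_sum]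
      _ = ∑ i, ((K i * ρ₀ * (K i)ᴴ) * A).trace := by
          refine Finset.sum_congr rfl fun i _ => ?_
          have h1 : ρ₀ * ((K i)ᴴ * A * K i) = (ρ₀ * (K i)ᴴ) * A * K i := by noncomm_ring
          have h2 : K i * (ρ₀ * (K i)ᴴ) * A = (K i * ρ₀ * (K i)ᴴ) * A := by noncomm_ring
          rw [h1, trace_mul_cycle, h2]
      _ = ((∑ i, K i * ρ₀ * (K i)ᴴ) * A).trace := by rw [← trace_sum, ← Finset.sum_mul]
      _ = (ρ₀ * A).trace := by rw [hfix]
  -- fixed points commute with the Kraus operators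
  have key : ∀ X : Mat d, (∑ i, (K i)ᴴ * X * K i = X) → ∀ i, X * K i = K i * X := by
    intro X hX i₀
    have hXH := hadj X hX
    set C : Fin n → Mat d := fun j => X * K j - K j * X with hC
    have hsum : ∑ j, (C j)ᴴ * C j = (∑ j, (K j)ᴴ * (Xᴴ * X) * K j) - Xᴴ * X := by
      have e1 : ∀ j, (C j)ᴴ * C j
          = (K j)ᴴ * (Xᴴ * X) * K j - ((K j)ᴴ * Xᴴ * K j) * X
            - Xᴴ * ((K j)ᴴ * X * K j) + Xᴴ * ((K j)ᴴ * K j) * X := by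
        intro j
        have hCj : (C j)ᴴ = (K j)ᴴ * Xᴴ - Xᴴ * (K j)ᴴ := by
          simp [hC, conjTranspose_mul]
        rw [hCj, hC]
        noncomm_ring
      calc ∑ j, (C j)ᴴ * C j
          = ∑ j, ((K j)ᴴ * (Xᴴ * X) * K j - ((K j)ᴴ * Xᴴ * K j) * X
              - Xᴴ * ((K j)ᴴ * X * K j) + Xᴴ * ((K j)ᴴ * K j) * X) :=
            Finset.sum_congr rfl fun j _ => e1 j
        _ = (∑ j, (K j)ᴴ * (Xᴴ * X) * K j) - (∑ j, (K j)ᴴ * Xᴴ * K j) * X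
              - Xᴴ * (∑ j, (K j)ᴴ * X * K j) + Xᴴ * (∑ j, (K j)ᴴ * K j) * X := by
            simp only [Finset.sum_add_distrib, Finset.sum_sub_distrib,
              Finset.sum_mul, Finset.mul_sum]
        _ = (∑ j, (K j)ᴴ * (Xᴴ * X) * K j) - Xᴴ * X := by
            rw [hX, hXH, hTP]
            noncomm_ring
    -- the trace of the sum of the positive matrices C j ρ₀ (C j)ᴴ vanishes
    have htr : (∑ j, C j * ρ₀ * (C j)ᴴ).trace = 0 := by
      have step : ∀ j, (C j * ρ₀ * (C j)ᴴ).trace = (ρ₀ * ((C j)ᴴ * C j)).trace := by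
        intro j
        rw [Matrix.trace_mul_comm (C j * ρ₀) ((C j)ᴴ), Matrix.trace_mul_comm ρ₀ ((C j)ᴴ * C j),
          ← Matrix.mul_assoc]
      calc (∑ j, C j * ρ₀ * (C j)ᴴ).trace
          = ∑ j, (C j * ρ₀ * (C j)ᴴ).trace := by rw [trace_sum]
        _ = ∑ j, (ρ₀ * ((C j)ᴴ * C j)).trace := Finset.sum_congr rfl fun j _ => step j
        _ = (ρ₀ * ∑ j, (C j)ᴴ * C j).trace := by rw [Finset.mul_sum, trace_sum]
        _ = 0 := by
            rw [hsum, Matrix.mul_sub, trace_sub]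
            have := tr_inv (Xᴴ * X)
            rw [this]
            ring
    -- each summand is PSD, hence vanishes
    have hpsd : ∀ j, (C j * ρ₀ * (C j)ᴴ).PosSemidef :=
      fun j => hρ₀.1.posSemidef.mul_mul_conjTranspose_same (C j)
    have hzero : C i₀ * ρ₀ * (C i₀)ᴴ = 0 := by
      have hall : ∀ j ∈ Finset.univ, (C j * ρ₀ * (C j)ᴴ).trace = 0 := by
        rw [← Finset.sum_eq_zero_iff_of_nonneg (fun j _ => psd_trace_nonneg (hpsd j))]
        rw [trace_sum] at htr
        exact htr
      exact psd_trace_zero (hpsd i₀) (hall i₀ (Finset.mem_univ i₀))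
    -- conclude C i₀ = 0 using invertibility of ρ₀
    obtain ⟨S, hSS, hSH⟩ := posDef_sqrt_aux hρ₀.1.posSemidef
    have hCS : (C i₀ * S) * (C i₀ * S)ᴴ = 0 := by
      rw [conjTranspose_mul, hSH]
      calc C i₀ * S * (S * (C i₀)ᴴ) = C i₀ * (S * S) * (C i₀)ᴴ := by noncomm_ring
        _ = 0 := by rw [hSS, hzero]
    have hC0 : C i₀ * S = 0 := by
      rwa [self_mul_conjTranspose_eq_zero] at hCS
    have hdetS : IsUnit S.det := by
      have hdet : S.det * S.det = ρ₀.det := by rw [← det_mul, hSS]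
      have : ρ₀.det ≠ 0 := ne_of_gt hρ₀.1.det_pos
      refine isUnit_iff_ne_zero.mpr fun h0 => this ?_
      rw [← hdet, h0, mul_zero]
    have : C i₀ = 0 := by
      have := congrArg (· * S⁻¹) hC0
      simpa [Matrix.mul_assoc, Matrix.mul_nonsing_inv S hdetS] using this
    have := sub_eq_zero.mp this
    exact this
  -- the reverse inclusion
  have rev : ∀ X : Mat d, (∀ i, Commute X (K i)) → ∑ i, (K i)ᴴ * X * K i = X := by
    intro X hc
    calc ∑ i, (K i)ᴴ * X * K i = ∑ i, (K i)ᴴ * K i * X := by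
          refine Finset.sum_congr rfl fun i _ => ?_
          rw [Matrix.mul_assoc, (hc i).eq, ← Matrix.mul_assoc]
      _ = X := by rw [← Finset.sum_mul, hTP, one_mul]
  have hseteq : {X : Mat d | ∑ i, (K i)ᴴ * X * K i = X} =
      {X : Mat d | ∀ i, Commute X (K i) ∧ Commute X ((K i)ᴴ)} := by
    ext X
    constructor
    · intro hX i
      refine ⟨key X hX i, ?_⟩
      have h1 : Xᴴ * K i = K i * Xᴴ := key Xᴴ (hadj X hX) i
      have := congrArg conjTranspose h1
      show X * (K i)ᴴ = (K i)ᴴ * X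
      simpa [conjTranspose_mul] using this.symm
    · intro hX
      exact rev X fun i => (hX i).1
  refine ⟨hseteq, ?_, hadj, by simpa using hTP⟩
  intro X Y hX hY
  have hXc : ∀ i, Commute X (K i) ∧ Commute X ((K i)ᴴ) := (Set.ext_iff.mp hseteq X).mp hX
  have hYc : ∀ i, Commute Y (K i) ∧ Commute Y ((K i)ᴴ) := (Set.ext_iff.mp hseteq Y).mp hY
  exact rev (X * Y) fun i => ((hXc i).1).mul_left ((hYc i).1)
end

section
/- Let A be a POVM and Λ a channel compatible with A. If Λ has a faithful invariant state, then Fix(Λ*) ⊆ {A(x)}'_{x}, i.e., every fixed point of Λ* commutes with every effect A(x). -/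
open Matrix
open scoped ComplexOrder

lemma trace_mul_conjT_nonneg {d : ℕ} (B : Mat d) : 0 ≤ (B * Bᴴ).trace := by
  unfold Matrix.trace
  refine Finset.sum_nonneg fun i _ => ?_
  simp only [Matrix.diag_apply, Matrix.mul_apply, Matrix.conjTranspose_apply]
  exact Finset.sum_nonneg fun k _ => mul_star_self_nonneg _

lemma eq_zero_of_trace_mul_conjT {d : ℕ} (B : Mat d) (h : (B * Bᴴ).trace = 0) : B = 0 := by
  unfold Matrix.trace at h
  simp only [Matrix.diag_apply, Matrix.mul_apply, Matrix.conjTranspose_apply] at h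
  have hnn : ∀ i ∈ (Finset.univ : Finset (Fin d)), 0 ≤ ∑ k, B i k * star (B i k) :=
    fun i _ => Finset.sum_nonneg fun k _ => mul_star_self_nonneg _
  have h1 := (Finset.sum_eq_zero_iff_of_nonneg hnn).mp h
  ext i k
  have h2 := (Finset.sum_eq_zero_iff_of_nonneg
    (fun k _ => mul_star_self_nonneg (B i k))).mp (h1 i (Finset.mem_univ i)) k (Finset.mem_univ k)
  rcases mul_eq_zero.mp h2 with h0 | h0
  · simpa using h0
  · simpa using (star_eq_zero.mp h0)

open scoped MatrixOrder in
lemma aux_comm {d : ℕ} {ι J : Type} [Fintype ι] [Fintype J]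
    (K : ι → J → Mat d)
    (hunit : ∑ x, ∑ j, (K x j)ᴴ * K x j = 1)
    (ρ₀ : Mat d) (hρ : ρ₀.PosDef)
    (hfix : ∑ x, ∑ j, K x j * ρ₀ * (K x j)ᴴ = ρ₀)
    (Y : Mat d) (hY : ∑ x, ∑ j, (K x j)ᴴ * Y * K x j = Y) :
    ∀ x j, K x j * Y = Y * K x j := by
  classical
  set s := CFC.sqrt ρ₀ with hs_def
  have hs : s * s = ρ₀ := CFC.sqrt_mul_sqrt_self ρ₀ hρ.posSemidef.nonneg
  have hsH : sᴴ = s := (CFC.sqrt_nonneg ρ₀).posSemidef.1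
  set C : ι → J → Mat d := fun x j => K x j * Y - Y * K x j with hC
  -- conj transpose of hY
  have hYH : ∑ x, ∑ j, (K x j)ᴴ * Yᴴ * K x j = Yᴴ := by
    have := congrArg Matrix.conjTranspose hY
    simpa only [conjTranspose_sum, conjTranspose_mul, conjTranspose_conjTranspose,
      Matrix.mul_assoc] using this
  have h1 : ∑ x, ∑ j, ((K x j * Y)ᴴ * (K x j * Y) * ρ₀).trace = (Yᴴ * Y * ρ₀).trace := by
    have e : ∀ (x : ι) (j : J), (K x j * Y)ᴴ * (K x j * Y) * ρ₀
        = Yᴴ * ((K x j)ᴴ * K x j) * (Y * ρ₀) := by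
      intro x j; simp only [conjTranspose_mul, Matrix.mul_assoc]
    simp only [e, ← Matrix.trace_sum, ← Finset.sum_mul, ← Finset.mul_sum]
    rw [hunit, mul_one, Matrix.mul_assoc]
  have h2 : ∑ x, ∑ j, ((K x j * Y)ᴴ * (Y * K x j) * ρ₀).trace = (Yᴴ * Y * ρ₀).trace := by
    have e : ∀ (x : ι) (j : J), (K x j * Y)ᴴ * (Y * K x j) * ρ₀
        = Yᴴ * ((K x j)ᴴ * Y * K x j) * ρ₀ := by
      intro x j; simp only [conjTranspose_mul, Matrix.mul_assoc]
    simp only [e, ← Matrix.trace_sum, ← Finset.sum_mul, ← Finset.mul_sum]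
    rw [hY]
  have h3 : ∑ x, ∑ j, ((Y * K x j)ᴴ * (K x j * Y) * ρ₀).trace = (Yᴴ * Y * ρ₀).trace := by
    have e : ∀ (x : ι) (j : J), (Y * K x j)ᴴ * (K x j * Y) * ρ₀
        = ((K x j)ᴴ * Yᴴ * K x j) * (Y * ρ₀) := by
      intro x j; simp only [conjTranspose_mul, Matrix.mul_assoc]
    simp only [e, ← Matrix.trace_sum, ← Finset.sum_mul]
    rw [hYH, Matrix.mul_assoc]
  have h4 : ∑ x, ∑ j, ((Y * K x j)ᴴ * (Y * K x j) * ρ₀).trace = (Yᴴ * Y * ρ₀).trace := by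
    have e : ∀ (x : ι) (j : J), ((Y * K x j)ᴴ * (Y * K x j) * ρ₀).trace
        = ((Yᴴ * Y) * (K x j * ρ₀ * (K x j)ᴴ)).trace := by
      intro x j
      rw [show (Y * K x j)ᴴ * (Y * K x j) * ρ₀ = (K x j)ᴴ * ((Yᴴ * Y) * (K x j * ρ₀)) by
        simp only [conjTranspose_mul, Matrix.mul_assoc]]
      rw [Matrix.trace_mul_comm]
      simp only [Matrix.mul_assoc]
    simp only [e, ← Matrix.trace_sum, ← Finset.mul_sum]
    rw [hfix]
  have key : ∑ x, ∑ j, ((C x j * s) * (C x j * s)ᴴ).trace = 0 := by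
    have hterm : ∀ (x : ι) (j : J), ((C x j * s) * (C x j * s)ᴴ).trace
        = ((C x j)ᴴ * C x j * ρ₀).trace := by
      intro x j
      rw [show (C x j * s) * (C x j * s)ᴴ = C x j * ρ₀ * (C x j)ᴴ by
        rw [conjTranspose_mul, hsH, ← hs]; simp only [Matrix.mul_assoc]]
      rw [Matrix.trace_mul_cycle]
    have hexp : ∀ (x : ι) (j : J), ((C x j)ᴴ * C x j * ρ₀).trace
        = ((K x j * Y)ᴴ * (K x j * Y) * ρ₀).trace - ((K x j * Y)ᴴ * (Y * K x j) * ρ₀).trace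
          - ((Y * K x j)ᴴ * (K x j * Y) * ρ₀).trace + ((Y * K x j)ᴴ * (Y * K x j) * ρ₀).trace := by
      intro x j
      simp only [hC, conjTranspose_sub, sub_mul, mul_sub, Matrix.trace_sub]
      ring
    simp only [hterm, hexp, Finset.sum_add_distrib, Finset.sum_sub_distrib, h1, h2, h3, h4]
    ring
  have hnn : ∀ x ∈ (Finset.univ : Finset ι), 0 ≤ ∑ j, ((C x j * s) * (C x j * s)ᴴ).trace :=
    fun x _ => Finset.sum_nonneg fun j _ => trace_mul_conjT_nonneg _
  have hx0 := (Finset.sum_eq_zero_iff_of_nonneg hnn).mp key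
  intro x j
  have hj0 := (Finset.sum_eq_zero_iff_of_nonneg
    (fun j _ => trace_mul_conjT_nonneg (C x j * s))).mp (hx0 x (Finset.mem_univ x)) j
    (Finset.mem_univ j)
  have hCs : C x j * s = 0 := eq_zero_of_trace_mul_conjT _ hj0
  have hCρ : C x j * ρ₀ = 0 := by
    rw [← hs, ← Matrix.mul_assoc, hCs, Matrix.zero_mul]
  have hdet : IsUnit ρ₀.det := hρ.det_pos.ne'.isUnit
  have : C x j = 0 := by
    have := congrArg (fun M => M * ρ₀⁻¹) hCρ
    simpa [Matrix.mul_assoc, Matrix.mul_nonsing_inv _ hdet] using this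
  have := sub_eq_zero.mp this
  exact this

theorem stmt9 {d : ℕ} (hd : 0 < d) {ι J : Type} [Fintype ι] [Fintype J]
    (A : ι → Mat d) (K : ι → J → Mat d)
    (hK : ∀ x, A x = ∑ j, (K x j)ᴴ * K x j)
    (hA : IsPOVM A)
    (ρ₀ : Mat d) (hρ₀ : ρ₀.PosDef ∧ ρ₀.trace = 1)
    (hfix : ∑ x, ∑ j, K x j * ρ₀ * (K x j)ᴴ = ρ₀) :
    ∀ X : Mat d, (∑ x, ∑ j, (K x j)ᴴ * X * K x j = X) → ∀ x, Commute X (A x) := by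
  have hunit : ∑ x, ∑ j, (K x j)ᴴ * K x j = 1 := by
    rw [← hA.2]; exact Finset.sum_congr rfl fun x _ => (hK x).symm
  intro X hX x
  have hXH : ∑ x, ∑ j, (K x j)ᴴ * Xᴴ * K x j = Xᴴ := by
    have := congrArg Matrix.conjTranspose hX
    simpa only [conjTranspose_sum, conjTranspose_mul, conjTranspose_conjTranspose,
      Matrix.mul_assoc] using this
  have hc1 := aux_comm K hunit ρ₀ hρ₀.1 hfix X hX
  have hc2 := aux_comm K hunit ρ₀ hρ₀.1 hfix Xᴴ hXH
  have hc2' : ∀ y j, X * (K y j)ᴴ = (K y j)ᴴ * X := by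
    intro y j
    have := congrArg Matrix.conjTranspose (hc2 y j)
    simpa only [conjTranspose_mul, conjTranspose_conjTranspose] using this
  show X * A x = A x * X
  rw [hK, Finset.mul_sum, Finset.sum_mul]
  refine Finset.sum_congr rfl fun j _ => ?_
  rw [← Matrix.mul_assoc, hc2' x j, Matrix.mul_assoc, ← hc1 x j, Matrix.mul_assoc]
end

section
/- Let Λ(ρ) = ½UρU* + ½VρV* on ℂ^N (N ≥ 3) with U the clock and V the shift matrix. Then every POVM effect A(x) of an observable compatible with Λ lies in the span of {1, U*V, V*U}; hence dim span(A) ≤ 3 and no informationally complete observable is compatible with Λ. -/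
open Matrix
open scoped ComplexOrder

private lemma sum_conj_self_zero {P : Type*} [Fintype P] (f : P → ℂ)
    (h : ∑ i, f i * (starRingEnd ℂ) (f i) = 0) : ∀ i, f i = 0 := by
  have h' : ∑ i, (Complex.normSq (f i) : ℂ) = 0 := by
    simpa [Complex.mul_conj] using h
  have h'' : ∑ i, Complex.normSq (f i) = 0 := by exact_mod_cast h'
  intro i
  have := (Finset.sum_eq_zero_iff_of_nonneg
    (fun i _ => Complex.normSq_nonneg (f i))).mp h'' i (Finset.mem_univ i)
  exact Complex.normSq_eq_zero.mp this

private lemma eq_of_sums {P : Type*} [Fintype P] (f g : P → ℂ) (r : ℂ)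
    (hr : (starRingEnd ℂ) r = r)
    (hff : ∑ i, f i * (starRingEnd ℂ) (f i) = r)
    (hgg : ∑ i, g i * (starRingEnd ℂ) (g i) = r)
    (hfg : ∑ i, f i * (starRingEnd ℂ) (g i) = r) :
    ∀ i, f i = g i := by
  have hgf : ∑ i, g i * (starRingEnd ℂ) (f i) = (r : ℂ) := by
    have := congrArg (starRingEnd ℂ) hfg
    rw [map_sum] at this
    rw [hr] at this
    rw [← this]
    exact Finset.sum_congr rfl (fun i _ => by rw [(starRingEnd ℂ).map_mul, Complex.conj_conj]; ring)
  have key : ∑ i, (f i - g i) * (starRingEnd ℂ) (f i - g i) = 0 := by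
    have : ∀ i, (f i - g i) * (starRingEnd ℂ) (f i - g i)
        = f i * (starRingEnd ℂ) (f i) - f i * (starRingEnd ℂ) (g i)
          - g i * (starRingEnd ℂ) (f i) + g i * (starRingEnd ℂ) (g i) := by
      intro i; simp [map_sub]; ring
    rw [Finset.sum_congr rfl (fun i _ => this i)]
    simp [Finset.sum_add_distrib, Finset.sum_sub_distrib, hff, hgg, hfg, hgf]
  intro i
  have := sum_conj_self_zero _ key i
  exact sub_eq_zero.mp this

private lemma sum_two {N : ℕ} (s t : Fin N) (hst : s ≠ t) (a b : ℂ) (g : Fin N → ℂ) :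
    ∑ k, (if k = s then a else if k = t then b else 0) * g k = a * g s + b * g t := by
  have h : ∀ k : Fin N, (if k = s then a else if k = t then b else 0) * g k
      = (if k = s then a * g s else 0) + (if k = t then b * g t else 0) := by
    intro k
    by_cases h1 : k = s
    · subst h1; simp [hst]
    · by_cases h2 : k = t
      · subst h2; simp [h1]
      · simp [h1, h2]
  rw [Finset.sum_congr rfl (fun k _ => h k), Finset.sum_add_distrib]
  simp [Finset.sum_ite_eq']

private def tp {N : ℕ} (s t : Fin N) (a b : ℂ) : Fin N → ℂ :=
  fun i => if i = s then a else if i = t then b else 0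

private lemma tp_psd {N : ℕ} (v : Fin N → ℂ) :
    (Matrix.vecMulVec v (star v)).PosSemidef := by
  have := Matrix.posSemidef_conjTranspose_mul_self (Matrix.replicateRow Unit (star v))
  rwa [Matrix.conjTranspose_replicateRow, star_star, ← Matrix.vecMulVec_eq] at this

private lemma tp_trace_mul {N : ℕ} (s t : Fin N) (hst : s ≠ t) (a b : ℂ)
    (B : Matrix (Fin N) (Fin N) ℂ) :
    (Matrix.vecMulVec (tp s t a b) (star (tp s t a b)) * B).trace
      = a * (starRingEnd ℂ) a * B s s + a * (starRingEnd ℂ) b * B t s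
        + b * (starRingEnd ℂ) a * B s t + b * (starRingEnd ℂ) b * B t t := by
  have hstar : ∀ l, star (tp s t a b) l
      = (if l = s then (starRingEnd ℂ) a else if l = t then (starRingEnd ℂ) b else 0) := by
    intro l
    simp [tp, apply_ite (starRingEnd ℂ), Complex.star_def]
  have hdiag : ∀ k, (Matrix.vecMulVec (tp s t a b) (star (tp s t a b)) * B).diag k
      = (if k = s then a else if k = t then b else 0)
          * ((starRingEnd ℂ) a * B s k + (starRingEnd ℂ) b * B t k) := by
    intro k
    simp only [Matrix.diag, Matrix.mul_apply, Matrix.vecMulVec_apply, mul_assoc]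
    rw [← Finset.mul_sum]
    have : ∑ l, star (tp s t a b) l * B l k
        = (starRingEnd ℂ) a * B s k + (starRingEnd ℂ) b * B t k := by
      rw [Finset.sum_congr rfl (fun l _ => by rw [hstar l])]
      exact sum_two s t hst _ _ _
    rw [this]; rfl
  rw [Matrix.trace, Finset.sum_congr rfl (fun k _ => hdiag k), sum_two s t hst]
  ring

theorem stmt16 (N : ℕ) [NeZero N] (hN : 3 ≤ N)
    (U V : Mat N)
    (hU : U = Matrix.diagonal (fun n : Fin N =>
      Complex.exp (2 * Real.pi * Complex.I * (n : ℕ) / N)))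
    (hV : V = Matrix.of (fun i j : Fin N => if i = j + 1 then (1 : ℂ) else 0))
    {ι J : Type} [Fintype ι] [Fintype J]
    (K : ι → J → Mat N) (A : ι → Mat N)
    (hKraus : ∀ ρ : Mat N, ∑ x, ∑ j, K x j * ρ * (K x j)ᴴ =
      (1/2 : ℂ) • (U * ρ * Uᴴ) + (1/2 : ℂ) • (V * ρ * Vᴴ))
    (hA : ∀ x, A x = ∑ j, (K x j)ᴴ * K x j) :
    (∀ x, A x ∈ Submodule.span ℂ ({1, Uᴴ * V, Vᴴ * U} : Set (Mat N))) ∧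
    Module.finrank ℂ (Submodule.span ℂ (Set.range A)) ≤ 3 ∧
    ¬ InfoComplete A := by
  classical
  set ω : Fin N → ℂ := fun n => Complex.exp (2 * Real.pi * Complex.I * (n : ℕ) / N) with hω
  -- basic Fin facts
  have hv1 : (1 : Fin N).val = 1 := by rw [Fin.val_one', Nat.mod_eq_of_lt (by omega)]
  have hv0 : (0 : Fin N).val = 0 := rfl
  have h10 : (1 : Fin N) ≠ 0 := by intro h; apply_fun Fin.val at h; omega
  have hsucc : ∀ a : Fin N, a + 1 ≠ a := by
    intro a h
    have : (1 : Fin N) = 0 := by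
      have := congrArg (fun z => z - a) h
      simpa [add_comm, add_sub_cancel_right, sub_self] using this
    exact h10 this
  -- conj(ω n) * ω n = 1
  have hωc : ∀ n : Fin N, ω n * (starRingEnd ℂ) (ω n) = 1 := by
    intro n
    have hc : (starRingEnd ℂ) (ω n) = Complex.exp (-(2 * Real.pi * Complex.I * (n : ℕ) / N)) := by
      rw [hω, ← Complex.exp_conj]
      congr 1
      rw [map_div₀, (starRingEnd ℂ).map_mul, (starRingEnd ℂ).map_mul, (starRingEnd ℂ).map_mul]
      simp [Complex.conj_I, Complex.conj_ofReal, map_ofNat]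
      ring
    rw [hω, hc, ← Complex.exp_add]
    simp
  -- entries of U and V
  have hUe : ∀ c a : Fin N, U c a = if c = a then ω a else 0 := by
    intro c a
    rw [hU, Matrix.diagonal_apply]
    by_cases h : c = a <;> simp [h]
  have hVe : ∀ c a : Fin N, V c a = if c = a + 1 then 1 else 0 := by
    intro c a; rw [hV]; rfl
  -- Choi identity
  have key : ∀ (M : Mat N) (a b c d : Fin N),
      (M * Matrix.single a b (1:ℂ) * Mᴴ) c d = M c a * (starRingEnd ℂ) (M d b) := by
    intro M a b c d
    simp [Matrix.mul_apply, Matrix.single, Matrix.conjTranspose_apply,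
      Finset.mul_sum, Finset.sum_mul, mul_ite, ite_mul, zero_mul, mul_zero,
      ite_and, Finset.sum_ite_eq, Finset.sum_ite_eq']
  have choi : ∀ a b c d : Fin N,
      ∑ p : ι × J, K p.1 p.2 c a * (starRingEnd ℂ) (K p.1 p.2 d b)
        = (1/2) * (U c a * (starRingEnd ℂ) (U d b))
          + (1/2) * (V c a * (starRingEnd ℂ) (V d b)) := by
    intro a b c d
    have h := hKraus (Matrix.single a b (1:ℂ))
    have h2 := Matrix.ext_iff.mpr h c d
    rw [Fintype.sum_prod_type]
    simpa [Matrix.sum_apply, Matrix.add_apply, Matrix.smul_apply, key, smul_eq_mul]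
      using h2

  have hN1 : ¬ N = 1 := by omega
  have hhalf : (starRingEnd ℂ) (1/2 : ℂ) = 1/2 := by rw [map_div₀, (starRingEnd ℂ).map_one, map_ofNat]
  have hω0 : ω 0 = 1 := by
    show Complex.exp _ = 1
    rw [show ((((0:Fin N) : ℕ)) : ℂ) = 0 by rw [hv0]; simp]
    rw [mul_zero, zero_div, Complex.exp_zero]
  have h00 : ∑ p : ι × J, K p.1 p.2 0 0 * (starRingEnd ℂ) (K p.1 p.2 0 0) = 1/2 := by
    rw [choi 0 0 0 0]
    simp [hUe, hVe, hωc, Ne.symm (hsucc 0), hN1]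
  have claimK : ∀ (x : ι) (j : J), K x j = K x j 0 0 • U + K x j 1 0 • V := by
    intro x j
    ext c a
    by_cases hca : c = a
    · subst hca
      -- diagonal rigidity
      have hAA : ∑ p : ι × J, K p.1 p.2 c c * (starRingEnd ℂ) (K p.1 p.2 c c) = 1/2 := by
        rw [choi c c c c]
        simp [hUe, hVe, hωc, Ne.symm (hsucc c), hN1]
      have hA0 : ∑ p : ι × J, K p.1 p.2 c c * (starRingEnd ℂ) (K p.1 p.2 0 0)
          = (1/2) * ω c := by
        rw [choi c 0 c 0]
        simp [hUe, hVe, hω0, Ne.symm (hsucc c), Ne.symm (hsucc 0), hN1]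
      have hdiag := eq_of_sums (fun p : ι × J => K p.1 p.2 c c)
        (fun p : ι × J => ω c * K p.1 p.2 0 0) (1/2) hhalf hAA
        (by
          have : ∀ p : ι × J, (ω c * K p.1 p.2 0 0) * (starRingEnd ℂ) (ω c * K p.1 p.2 0 0)
              = (ω c * (starRingEnd ℂ) (ω c)) * (K p.1 p.2 0 0 * (starRingEnd ℂ) (K p.1 p.2 0 0)) := by
            intro p; rw [(starRingEnd ℂ).map_mul]; ring
          rw [Finset.sum_congr rfl (fun p _ => this p), ← Finset.mul_sum, hωc, one_mul, h00])
        (by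
          have : ∀ p : ι × J, K p.1 p.2 c c * (starRingEnd ℂ) (ω c * K p.1 p.2 0 0)
              = (starRingEnd ℂ) (ω c) * (K p.1 p.2 c c * (starRingEnd ℂ) (K p.1 p.2 0 0)) := by
            intro p; rw [(starRingEnd ℂ).map_mul]; ring
          rw [Finset.sum_congr rfl (fun p _ => this p), ← Finset.mul_sum, hA0]
          have := hωc c
          calc (starRingEnd ℂ) (ω c) * (1/2 * ω c) = (1/2) * (ω c * (starRingEnd ℂ) (ω c)) := by ring
          _ = 1/2 := by rw [hωc]; ring)
      have hd := hdiag (x, j)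
      simp only at hd
      rw [Matrix.add_apply, Matrix.smul_apply, Matrix.smul_apply, hUe, hVe,
        if_pos rfl, if_neg (Ne.symm (hsucc c)), hd]
      simp [smul_eq_mul, mul_comm]
    · by_cases hca1 : c = a + 1
      · subst hca1
        have hBB : ∑ p : ι × J, K p.1 p.2 (a+1) a * (starRingEnd ℂ) (K p.1 p.2 (a+1) a) = 1/2 := by
          rw [choi a a (a+1) (a+1)]
          simp [hUe, hVe, hsucc a, hN1]
        have hgg1 : ∑ p : ι × J, K p.1 p.2 1 0 * (starRingEnd ℂ) (K p.1 p.2 1 0) = 1/2 := by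
          rw [choi 0 0 1 1]
          simp [hUe, hVe, h10, hN1]
        have hB0 : ∑ p : ι × J, K p.1 p.2 (a+1) a * (starRingEnd ℂ) (K p.1 p.2 1 0) = 1/2 := by
          rw [choi a 0 (a+1) 1]
          simp [hUe, hVe, hsucc a, h10, hN1]
        have hsub := eq_of_sums (fun p : ι × J => K p.1 p.2 (a+1) a)
          (fun p : ι × J => K p.1 p.2 1 0) (1/2) hhalf hBB hgg1 hB0 (x, j)
        simp only at hsub
        rw [Matrix.add_apply, Matrix.smul_apply, Matrix.smul_apply, hUe, hVe,
          if_neg (hsucc a), if_pos rfl, hsub]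
        simp
      · have h0 : ∀ p : ι × J, K p.1 p.2 c a = 0 := by
          apply sum_conj_self_zero
          rw [choi a a c c]
          simp [hUe, hVe, hca, hca1, hN1]
        rw [Matrix.add_apply, Matrix.smul_apply, Matrix.smul_apply, hUe, hVe,
          if_neg hca, if_neg hca1, h0 (x, j)]
        simp

  have hUU : Uᴴ * U = 1 := by
    rw [hU, Matrix.diagonal_conjTranspose, Matrix.diagonal_mul_diagonal]
    have h : ((fun i => (star ω) i * ω i) : Fin N → ℂ) = fun _ => 1 :=
      funext fun n => by simpa [Pi.star_apply, Complex.star_def, mul_comm] using hωc n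
    rw [h]
    exact Matrix.diagonal_one
  have hVV : Vᴴ * V = 1 := by
    ext i k
    simp [Matrix.mul_apply, Matrix.conjTranspose_apply, hVe, Matrix.one_apply,
      apply_ite (starRingEnd ℂ), ite_mul, mul_ite, Finset.sum_ite_eq', add_left_inj, eq_comm]
  have memA : ∀ x, A x ∈ Submodule.span ℂ ({1, Uᴴ * V, Vᴴ * U} : Set (Mat N)) := by
    intro x
    rw [hA x]
    refine Submodule.sum_mem _ (fun j _ => ?_)
    have expand : (K x j)ᴴ * K x j
        = (star (K x j 0 0) * K x j 0 0 + star (K x j 1 0) * K x j 1 0) • (1 : Mat N)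
          + (star (K x j 0 0) * K x j 1 0) • (Uᴴ * V)
          + (star (K x j 1 0) * K x j 0 0) • (Vᴴ * U) := by
      conv_lhs => rw [claimK x j]
      simp only [Matrix.conjTranspose_add, Matrix.conjTranspose_smul, add_mul, mul_add,
        smul_mul_assoc, mul_smul_comm, smul_smul, hUU, hVV]
      module
    rw [expand]
    refine Submodule.add_mem _ (Submodule.add_mem _ (Submodule.smul_mem _ _ ?_)
      (Submodule.smul_mem _ _ ?_)) (Submodule.smul_mem _ _ ?_)
    · exact Submodule.subset_span (by simp)
    · exact Submodule.subset_span (by simp)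
    · exact Submodule.subset_span (by simp)
  have hspanle : Submodule.span ℂ (Set.range A)
      ≤ Submodule.span ℂ ({1, Uᴴ * V, Vᴴ * U} : Set (Mat N)) := by
    rw [Submodule.span_le]; rintro _ ⟨x, rfl⟩; exact memA x
  have hrank : Module.finrank ℂ ↥(Submodule.span ℂ (Set.range A)) ≤ 3 := by
    refine (Submodule.finrank_mono hspanle).trans ?_
    refine (finrank_span_le_card _).trans ?_
    have h1 : ({1, Uᴴ * V, Vᴴ * U} : Set (Mat N)).toFinset
        ⊆ ({1, Uᴴ * V, Vᴴ * U} : Finset (Mat N)) := by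
      intro y hy
      simpa using Set.mem_toFinset.mp hy
    refine (Finset.card_le_card h1).trans ?_
    refine (Finset.card_insert_le _ _).trans (Nat.succ_le_succ ?_)
    refine (Finset.card_insert_le _ _).trans (Nat.succ_le_succ ?_)
    simp

  -- index facts
  have h01 : (0 : Fin N) ≠ 1 := Ne.symm h10
  have hv2 : (2 : Fin N).val = 2 := by
    have : (2 : Fin N) = 1 + 1 := by
      ext; simp [Fin.val_add, Nat.add_mod]; rw [Nat.mod_mod, ← Nat.add_mod]
    rw [this, Fin.val_add, hv1]
    exact Nat.mod_eq_of_lt (by omega)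
  have h2eq : (2 : Fin N) = 1 + 1 := by
    ext; simp [Fin.val_add, Nat.add_mod]; rw [Nat.mod_mod, ← Nat.add_mod]
  have h21 : (2 : Fin N) ≠ 1 := by
    intro h; apply_fun Fin.val at h; rw [hv2, hv1] at h; omega
  have h20 : (2 : Fin N) ≠ 0 := by
    intro h; apply_fun Fin.val at h; rw [hv2, hv0] at h; omega
  have h012 : ¬ (0 : Fin N) = 1 + 1 := by rw [← h2eq]; exact Ne.symm h20
  have h123 : ¬ (1 : Fin N) = 2 + 1 := by
    intro h; apply_fun Fin.val at h
    rw [hv1, Fin.val_add, hv2, hv1] at h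
    have h3 : (2 + 1) % N = 0 ∨ (2 + 1) % N = 3 := by
      rcases Nat.lt_or_ge 3 N with hlt | hge
      · right; exact Nat.mod_eq_of_lt hlt
      · left; have : N = 3 := by omega
        simp [this]
    omega
  have h101 : (1 : Fin N) = 0 + 1 := (zero_add 1).symm
  -- entries of the span generators
  have hUVe : ∀ l k : Fin N, (Uᴴ * V) l k
      = (starRingEnd ℂ) (ω l) * (if k + 1 = l then 1 else 0) := by
    intro l k
    simp [Matrix.mul_apply, Matrix.conjTranspose_apply, hUe, hVe,
      apply_ite (starRingEnd ℂ), ite_mul, Finset.sum_ite_eq']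
  have hVUe : ∀ l k : Fin N, (Vᴴ * U) l k
      = (if k = l + 1 then 1 else 0) * ω k := by
    intro l k
    simp [Matrix.mul_apply, Matrix.conjTranspose_apply, hUe, hVe,
      apply_ite (starRingEnd ℂ), ite_mul, mul_ite, Finset.sum_ite_eq']
  -- the two indistinguishable states
  set z : ℂ := -(1/2) * ω 1 * (starRingEnd ℂ) (ω 2) with hz
  have hcz : (starRingEnd ℂ) z = -(1/2) * (starRingEnd ℂ) (ω 1) * ω 2 := by
    rw [hz, (starRingEnd ℂ).map_mul, (starRingEnd ℂ).map_mul, map_neg, hhalf,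
      Complex.conj_conj]
  have hzz : z * (starRingEnd ℂ) z = 1/4 := by
    rw [hcz, hz]
    have e : -(1/2) * ω 1 * (starRingEnd ℂ) (ω 2) * (-(1/2) * (starRingEnd ℂ) (ω 1) * ω 2)
        = (1/4) * ((ω 1 * (starRingEnd ℂ) (ω 1)) * (ω 2 * (starRingEnd ℂ) (ω 2))) := by ring
    rw [e, hωc 1, hωc 2]; norm_num
  set ρ₁ : Mat N := Matrix.vecMulVec (tp 0 1 (1/2) (1/2)) (star (tp 0 1 (1/2) (1/2)))
      + Matrix.vecMulVec (tp 1 2 (1/2) z) (star (tp 1 2 (1/2) z)) with hρ₁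
  set ρ₂ : Mat N := Matrix.vecMulVec (tp 0 1 (1/2) (-(1/2))) (star (tp 0 1 (1/2) (-(1/2))))
      + Matrix.vecMulVec (tp 1 2 (1/2) (-z)) (star (tp 1 2 (1/2) (-z))) with hρ₂
  have hstate : ∀ (a b : ℂ), a * (starRingEnd ℂ) a = 1/4 → b * (starRingEnd ℂ) b = 1/4 →
      ∀ s t : Fin N, s ≠ t →
      (Matrix.vecMulVec (tp s t a b) (star (tp s t a b))).trace = 1/2 := by
    intro a b ha hb s t hst
    have h := tp_trace_mul s t hst a b (1 : Mat N)
    rw [mul_one] at h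
    rw [h, Matrix.one_apply_eq, Matrix.one_apply_eq,
      Matrix.one_apply_ne (Ne.symm hst), Matrix.one_apply_ne hst]
    rw [mul_one, mul_one, mul_zero, mul_zero]
    rw [ha, hb]; norm_num
  have hquarter : (1/2 : ℂ) * (starRingEnd ℂ) (1/2) = 1/4 := by rw [hhalf]; norm_num
  have hquarter' : (-(1/2) : ℂ) * (starRingEnd ℂ) (-(1/2)) = 1/4 := by
    rw [map_neg, hhalf]; norm_num
  have hzz' : (-z) * (starRingEnd ℂ) (-z) = 1/4 := by
    rw [map_neg, neg_mul_neg, hzz]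
  have hS1 : IsState ρ₁ := by
    constructor
    · exact (tp_psd _).add (tp_psd _)
    · rw [hρ₁, Matrix.trace_add, hstate _ _ hquarter hquarter _ _ h01,
        hstate _ _ hquarter hzz _ _ (Ne.symm h21)]
      norm_num
  have hS2 : IsState ρ₂ := by
    constructor
    · exact (tp_psd _).add (tp_psd _)
    · rw [hρ₂, Matrix.trace_add, hstate _ _ hquarter hquarter' _ _ h01,
        hstate _ _ hquarter hzz' _ _ (Ne.symm h21)]
      norm_num
  -- the trace functional of the difference
  have traceDiff : ∀ B : Mat N, ((ρ₁ - ρ₂) * B).trace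
      = (1/2) * B 1 0 + (1/2) * B 0 1 + (starRingEnd ℂ) z * B 2 1 + z * B 1 2 := by
    intro B
    rw [hρ₁, hρ₂, sub_mul, Matrix.trace_sub, add_mul, add_mul,
      Matrix.trace_add, Matrix.trace_add,
      tp_trace_mul 0 1 h01 (1/2) (1/2) B,
      tp_trace_mul 1 2 (Ne.symm h21) (1/2) z B,
      tp_trace_mul 0 1 h01 (1/2) (-(1/2)) B,
      tp_trace_mul 1 2 (Ne.symm h21) (1/2) (-z) B]
    rw [hhalf, map_neg, map_neg, hhalf]
    ring
  have hker : ∀ B ∈ ({1, Uᴴ * V, Vᴴ * U} : Set (Mat N)), ((ρ₁ - ρ₂) * B).trace = 0 := by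
    intro B hB
    rcases hB with hB | hB | hB
    · subst hB
      rw [traceDiff]
      rw [Matrix.one_apply_ne h10, Matrix.one_apply_ne h01,
        Matrix.one_apply_ne h21, Matrix.one_apply_ne (Ne.symm h21)]
      ring
    · subst hB
      rw [traceDiff, hUVe 1 0, hUVe 0 1, hUVe 2 1, hUVe 1 2,
        if_pos (zero_add (1 : Fin N)), if_neg (fun h => h012 h.symm),
        if_pos h2eq.symm, if_neg (fun h => h123 h.symm), hcz]
      linear_combination (-(1/2) * (starRingEnd ℂ) (ω 1)) * hωc 2
    · subst hB
      rw [traceDiff, hVUe 1 0, hVUe 0 1, hVUe 2 1, hVUe 1 2,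
        if_neg h012, if_pos h101, if_neg h123, if_pos h2eq, hz]
      linear_combination (-(1/2) * ω 1) * hωc 2
  have hIC : ¬ InfoComplete A := by
    intro hic
    have hEq : ∀ x, (ρ₁ * A x).trace = (ρ₂ * A x).trace := by
      intro x
      have hmem := memA x
      have hL : ∀ B ∈ Submodule.span ℂ ({1, Uᴴ * V, Vᴴ * U} : Set (Mat N)),
          ((ρ₁ - ρ₂) * B).trace = 0 := by
        intro B hB
        set L : Mat N →ₗ[ℂ] ℂ :=
          (Matrix.traceLinearMap (Fin N) ℂ ℂ).comp (LinearMap.mulLeft ℂ (ρ₁ - ρ₂)) with hLd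
        have : Submodule.span ℂ ({1, Uᴴ * V, Vᴴ * U} : Set (Mat N)) ≤ LinearMap.ker L :=
          Submodule.span_le.mpr (fun C hC => LinearMap.mem_ker.mpr (hker C hC))
        exact LinearMap.mem_ker.mp (this hB)
      have h0 := hL _ hmem
      rw [sub_mul, Matrix.trace_sub, sub_eq_zero] at h0
      exact h0
    have heq := hic ρ₁ ρ₂ hS1 hS2 hEq
    have he := Matrix.ext_iff.mpr heq 0 1
    rw [hρ₁, hρ₂, Matrix.add_apply, Matrix.add_apply,
      Matrix.vecMulVec_apply, Matrix.vecMulVec_apply,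
      Matrix.vecMulVec_apply, Matrix.vecMulVec_apply] at he
    simp only [Pi.star_apply, tp, if_pos rfl, if_neg h01, if_neg (Ne.symm h20),
      if_neg h10] at he
    simp [Complex.star_def, map_neg, hhalf] at he
    exact absurd he (by norm_num)
  exact ⟨memA, hrank, hIC⟩
end

section
/- Let H = ⊕_{n=1}^N H_n ⊗ K_n be an orthogonal decomposition of a finite-dimensional Hilbert space H with N ≥ 1. Then (dim H)² + 1 − Σ_n (dim K_n)² − Σ_n (dim H_n)² ≥ 0, i.e., dim(⊕_n B(H_n)⊗1) + dim(⊕_n 1⊗B(K_n)) ≤ (dim H)² + 1. -/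
lemma key18 (x y : ℕ) (hx : 1 ≤ x) (hy : 1 ≤ y) : x + y ≤ x * y + 1 := by
  obtain ⟨y', rfl⟩ := Nat.exists_eq_add_of_le hy
  have h := Nat.le_mul_of_pos_left y' hx
  nlinarith

lemma aux18 {ι : Type*} [DecidableEq ι] (s : Finset ι) (a : ι → ℕ)
    (h : ∀ i ∈ s, 1 ≤ a i) (hs : s.Nonempty) :
    (∑ i ∈ s, a i ^ 2) + s.card ≤ (∑ i ∈ s, a i) ^ 2 + 1 := by
  induction s using Finset.induction_on with
  | empty => exact absurd hs (by simp)
  | @insert i s hi ih =>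
    rcases s.eq_empty_or_nonempty with rfl | hne
    · simp
    · have IH := ih (fun j hj => h j (Finset.mem_insert_of_mem hj)) hne
      have hS : s.card ≤ ∑ j ∈ s, a j := by
        calc s.card = ∑ _j ∈ s, 1 := by simp
        _ ≤ ∑ j ∈ s, a j := Finset.sum_le_sum (fun j hj => h j (Finset.mem_insert_of_mem hj))
      have h1 : 1 ≤ s.card := Finset.card_pos.mpr hne
      have hai : 1 ≤ a i := h i (Finset.mem_insert_self i s)
      rw [Finset.sum_insert hi, Finset.sum_insert hi, Finset.card_insert_of_notMem hi]
      nlinarith [sq_nonneg (∑ j ∈ s, a j)]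

theorem stmt18 (N : ℕ) (hN : 1 ≤ N) (dH dK : Fin N → ℕ)
    (hdH : ∀ n, 1 ≤ dH n) (hdK : ∀ n, 1 ≤ dK n) :
    ∑ n, (dH n) ^ 2 + ∑ n, (dK n) ^ 2 ≤ (∑ n, dH n * dK n) ^ 2 + 1 := by
  have step1 : ∑ n, (dH n) ^ 2 + ∑ n, (dK n) ^ 2 ≤ (∑ n, (dH n * dK n) ^ 2) + N := by
    rw [← Finset.sum_add_distrib]
    calc ∑ n, ((dH n) ^ 2 + (dK n) ^ 2) ≤ ∑ n : Fin N, ((dH n * dK n) ^ 2 + 1) := by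
          apply Finset.sum_le_sum
          intro n _
          have := key18 (dH n ^ 2) (dK n ^ 2) (Nat.one_le_pow _ _ (hdH n)) (Nat.one_le_pow _ _ (hdK n))
          rw [mul_pow]; omega
      _ = (∑ n, (dH n * dK n) ^ 2) + N := by
          rw [Finset.sum_add_distrib]; simp
  have step2 := aux18 Finset.univ (fun n => dH n * dK n)
    (fun n _ => Nat.one_le_iff_ne_zero.mpr (Nat.mul_ne_zero
      (Nat.one_le_iff_ne_zero.mp (hdH n)) (Nat.one_le_iff_ne_zero.mp (hdK n))))
    (Finset.univ_nonempty_iff.mpr (Fin.pos_iff_nonempty.mp hN))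
  simp only [Finset.card_univ, Fintype.card_fin] at step2
  omega
end
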